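/- arXiv:0904.0424 — 7 statements merged into one kernel-verified Lean document; each statement's English description precedes it below -/
import Mathlib

section
/- Every quasisimple profinite group is finite. That is, if Q is a profinite group (compact, Hausdorff, totally disconnected topological group) that is topologically perfect (Q equals the closure of its commutator subgroup) and Q/Z(Q) is simple as an abstract group, then Q is finite. -/
open scoped Pointwise
open scoped commutatorElement


/-- A subgroup `H` of `G` is subnormal: there is a finite chain of subgroups from `H`
to `G`, each normal in the next. -/
def IsSubnormalSub {G : Type*} [Group G] (H : Subgroup G) : Prop :=
  ∃ (n : ℕ) (s : ℕ → Subgroup G), s 0 = H ∧ s n = ⊤ ∧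
    ∀ i < n, s i ≤ s (i + 1) ∧ ((s i).subgroupOf (s (i + 1))).Normal

/-- A group is quasisimple if it is perfect and its central quotient is simple. -/
def IsQuasisimple (G : Type*) [Group G] : Prop :=
  commutator G = ⊤ ∧ IsSimpleGroup (G ⧸ Subgroup.center G)

/-- Commutators are unchanged by multiplying the arguments by central elements. -/
lemma commutatorElement_mul_center {G : Type*} [Group G] {z w : G}
    (hz : z ∈ Subgroup.center G) (hw : w ∈ Subgroup.center G) (g h : G) :
    ⁅g * z, h * w⁆ = ⁅g, h⁆ := by
  rw [Subgroup.mem_center_iff] at hz hw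
  have conj : ∀ (a u b : G), (∀ x, x * u = u * x) → (a * u) * b * (a * u)⁻¹ = a * b * a⁻¹ := by
    intro a u b hu
    have hub : u * b = b * u := (hu b).symm
    rw [mul_inv_rev]
    calc a * u * b * (u⁻¹ * a⁻¹) = a * (u * b) * u⁻¹ * a⁻¹ := by group
    _ = a * (b * u) * u⁻¹ * a⁻¹ := by rw [hub]
    _ = a * b * a⁻¹ := by group
  have h1 : ⁅g * z, h * w⁆ = (g * z) * (h * w) * (g * z)⁻¹ * (h * w)⁻¹ :=
    commutatorElement_def _ _
  rw [h1, conj g z (h * w) fun x => hz x]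
  have h2 : g * (h * w) * g⁻¹ = (g * h * g⁻¹) * w := by
    calc g * (h * w) * g⁻¹ = g * h * (w * g⁻¹) := by group
    _ = g * h * (g⁻¹ * w) := by rw [← hw g⁻¹]
    _ = (g * h * g⁻¹) * w := by group
  rw [h2, mul_inv_rev]
  calc g * h * g⁻¹ * w * (w⁻¹ * h⁻¹) = g * h * g⁻¹ * h⁻¹ := by group
  _ = ⁅g, h⁆ := (commutatorElement_def _ _).symm

/-- If the central quotient is finite, there are finitely many commutators. -/
lemma finite_commutatorSet_of_finite_quotient_center (G : Type*) [Group G]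
    [Finite (G ⧸ Subgroup.center G)] : Finite (commutatorSet G) := by
  set Z := Subgroup.center G
  have hsub : commutatorSet G ⊆
      Set.range (fun p : (G ⧸ Z) × (G ⧸ Z) => ⁅p.1.out, p.2.out⁆) := by
    rintro x ⟨g, h, rfl⟩
    obtain ⟨z, hz⟩ := QuotientGroup.mk_out_eq_mul Z g
    obtain ⟨w, hw⟩ := QuotientGroup.mk_out_eq_mul Z h
    refine ⟨((g : G ⧸ Z), (h : G ⧸ Z)), ?_⟩
    simp only [hz, hw]
    exact commutatorElement_mul_center z.2 w.2 g h
  exact ((Set.finite_range _).subset hsub).to_subtype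

/-- Every quasisimple profinite group is finite. -/
theorem quasisimple_profinite_finite (Q : Type*) [Group Q] [TopologicalSpace Q]
    [IsTopologicalGroup Q] [CompactSpace Q] [T2Space Q] [TotallyDisconnectedSpace Q]
    (hperf : (commutator Q).topologicalClosure = ⊤)
    (hsimple : IsSimpleGroup (Q ⧸ Subgroup.center Q)) :
    Finite Q := by
  by_cases hfin : Finite Q
  · exact hfin
  exfalso
  have hinf : Infinite Q := not_finite_iff_infinite.mp hfin
  -- find a proper open normal subgroup
  obtain ⟨x, hx⟩ : ∃ x : Q, x ≠ 1 := exists_ne 1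
  obtain ⟨W, hWclopen, hW1, hWsub⟩ :=
    compact_exists_isClopen_in_isOpen (isOpen_compl_singleton (x := x))
      (by simpa using hx.symm)
  obtain ⟨H, hHW⟩ :=
    IsTopologicalGroup.exist_openNormalSubgroup_sub_clopen_nhds_of_one hWclopen hW1
  have hxH : x ∉ H.toSubgroup := fun hmem => (hWsub (hHW hmem)) rfl
  have hHtop : (H.toSubgroup : Subgroup Q) ≠ ⊤ := by
    intro h
    exact hxH (h ▸ Subgroup.mem_top x)
  have hHclosed : IsClosed (H.toSubgroup : Set Q) := H.toOpenSubgroup.isClosed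
  -- H has finite index
  have hHfin : Finite (Q ⧸ H.toSubgroup) := inferInstance
  have hHfi : H.toSubgroup.FiniteIndex := H.toSubgroup.finiteIndex_of_finite_quotient
  -- the image of H in the simple central quotient
  set Z := Subgroup.center Q
  set π := QuotientGroup.mk' Z
  have hnormal : (H.toSubgroup.map π).Normal :=
    Subgroup.Normal.map H.isNormal' π (QuotientGroup.mk'_surjective Z)
  rcases hsimple.eq_bot_or_eq_top_of_normal _ hnormal with hbot | htop
  · -- H ≤ Z : center has finite index, so commutator is finite, hence Q finite
    have hle : H.toSubgroup ≤ Z := by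
      have := (Subgroup.map_eq_bot_iff _).mp hbot
      rwa [QuotientGroup.ker_mk'] at this
    have hZfi : Z.FiniteIndex := Subgroup.finiteIndex_of_le hle
    have hQZfin : Finite (Q ⧸ Z) := Z.finite_quotient_of_finiteIndex
    have hcs : Finite (commutatorSet Q) :=
      finite_commutatorSet_of_finite_quotient_center Q
    have hcomm : Finite (commutator Q) := inferInstance
    have hclosed : IsClosed ((commutator Q : Subgroup Q) : Set Q) :=
      (Set.toFinite _).isClosed
    have : (commutator Q).topologicalClosure = commutator Q :=
      SetLike.coe_injective hclosed.closure_eq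
    rw [this] at hperf
    have : Finite (⊤ : Subgroup Q) := hperf ▸ hcomm
    exact hfin (Finite.of_equiv _ Subgroup.topEquiv.toEquiv)
  · -- H ⊔ Z = ⊤ : commutator ≤ H, contradicting topological perfectness
    have hsup : H.toSubgroup ⊔ Z = ⊤ := by
      have := congrArg (Subgroup.comap π) htop
      rwa [Subgroup.comap_map_eq, QuotientGroup.ker_mk', Subgroup.comap_top] at this
    have hcommle : commutator Q ≤ H.toSubgroup := by
      rw [commutator_def, Subgroup.commutator_le]
      intro g _ h _
      have hg : g ∈ (H.toSubgroup ⊔ Z : Subgroup Q) := hsup ▸ Subgroup.mem_top g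
      have hh : h ∈ (H.toSubgroup ⊔ Z : Subgroup Q) := hsup ▸ Subgroup.mem_top h
      have hg' : g ∈ (H.toSubgroup : Set Q) * (Z : Set Q) := by
        rw [← Subgroup.mul_normal H.toSubgroup Z]; exact hg
      have hh' : h ∈ (H.toSubgroup : Set Q) * (Z : Set Q) := by
        rw [← Subgroup.mul_normal H.toSubgroup Z]; exact hh
      obtain ⟨a, ha, z, hz, rfl⟩ := hg'
      obtain ⟨b, hb, w, hw, rfl⟩ := hh'
      rw [commutatorElement_mul_center hz hw a b]
      exact H.toSubgroup.mul_mem (H.toSubgroup.mul_mem (H.toSubgroup.mul_mem ha hb) (H.toSubgroup.inv_mem ha)) (H.toSubgroup.inv_mem hb)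
    have : (commutator Q).topologicalClosure ≤ H.toSubgroup := by
      intro y hy
      exact hHclosed.closure_subset_iff.mpr hcommle hy
    rw [hperf] at this
    exact hHtop (top_le_iff.mp this)
end

section
/- Let G be a finite group and let Q and L be two distinct components of G (subnormal quasisimple subgroups). Then Q and L commute elementwise: [Q, L] = 1. -/
/-- A component of a group: a subnormal quasisimple subgroup. -/
def IsComponentFin {G : Type*} [Group G] (Q : Subgroup G) : Prop :=
  IsSubnormalSub Q ∧ IsQuasisimple Q

/-- The Fitting subgroup: the subgroup generated by all normal nilpotent subgroups. -/
def fittingSub (G : Type*) [Group G] : Subgroup G :=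
  ⨆ H ∈ {H : Subgroup G | H.Normal ∧ Group.IsNilpotent H}, H

/-- The layer: the subgroup generated by all components. -/
def layerSub (G : Type*) [Group G] : Subgroup G :=
  ⨆ Q ∈ {Q : Subgroup G | IsComponentFin Q}, Q

/-- The generalised Fitting subgroup `F*(G) = F(G) E(G)`. -/
def fstarSub (G : Type*) [Group G] : Subgroup G := fittingSub G ⊔ layerSub G

namespace ComponentsAux

variable {G : Type*} [Group G]

open scoped commutatorElement

/-- `A ≤ B` and `B` normalizes `A`. -/
def NIn (A B : Subgroup G) : Prop :=
  A ≤ B ∧ ∀ b ∈ B, ∀ a ∈ A, b * a * b⁻¹ ∈ A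

/-- Chains of length `n` of successively normal subgroups from `A` up to `B`. -/
def ChN (n : ℕ) (A B : Subgroup G) : Prop :=
  match n with
  | 0 => A = B
  | n + 1 => ∃ M, ChN n A M ∧ NIn M B

theorem chN_le {n : ℕ} : ∀ {A B : Subgroup G}, ChN n A B → A ≤ B := by
  induction n with
  | zero => intro A B h; exact le_of_eq h
  | succ n ih =>
    intro A B h
    obtain ⟨M, h, hM⟩ := h
    exact (ih h).trans hM.1

theorem chN_inf (H : Subgroup G) {n : ℕ} :
    ∀ {A B : Subgroup G}, ChN n A B → ChN n (A ⊓ H) (B ⊓ H) := by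
  induction n with
  | zero => intro A B h; rw [ChN] at h ⊢; rw [h]
  | succ n ih =>
    intro A B h
    obtain ⟨M, h, hM⟩ := h
    refine ⟨M ⊓ H, ih h, inf_le_inf_right H hM.1, ?_⟩
    intro b hb a ha
    rw [Subgroup.mem_inf] at hb ha ⊢
    exact ⟨hM.2 b hb.1 a ha.1, mul_mem (mul_mem hb.2 ha.2) (inv_mem hb.2)⟩

theorem chN_cases {n : ℕ} : ∀ {A B : Subgroup G}, ChN n A B →
    A = B ∨ ∃ M, NIn M B ∧ M ≠ B ∧ ∃ m, ChN m A M := by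
  induction n with
  | zero => intro A B h; exact Or.inl h
  | succ n ih =>
    intro A B h
    obtain ⟨M, h, hM⟩ := h
    by_cases hMB : M = B
    · subst hMB; exact ih h
    · exact Or.inr ⟨M, hM, hMB, n, h⟩

theorem subnormal_chN {Q : Subgroup G} (h : IsSubnormalSub Q) : ∃ n, ChN n Q ⊤ := by
  obtain ⟨n, s, h0, hn, hstep⟩ := h
  suffices H : ∀ k, k ≤ n → ChN k (s 0) (s k) by
    have := H n le_rfl
    rw [h0, hn] at this
    exact ⟨n, this⟩
  intro k
  induction k with
  | zero => intro _; rfl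
  | succ k ih =>
    intro hk
    refine ⟨s k, ih (Nat.le_of_succ_le hk), ?_⟩
    obtain ⟨hle, hnorm⟩ := hstep k (Nat.lt_of_succ_le hk)
    refine ⟨hle, fun b hb a ha => ?_⟩
    have hmem : (⟨a, hle ha⟩ : ↥(s (k + 1))) ∈ (s k).subgroupOf (s (k + 1)) := by
      rwa [Subgroup.mem_subgroupOf]
    simpa [Subgroup.mem_subgroupOf] using hnorm.conj_mem _ hmem ⟨b, hb⟩

theorem card_lt_of_lt {G : Type*} [Group G] [Finite G] {M B : Subgroup G}
    (hle : M ≤ B) (hne : M ≠ B) : Nat.card ↥M < Nat.card ↥B := by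
  have hss : (M : Set G) ⊂ (B : Set G) := ⟨hle, fun h => hne (le_antisymm hle h)⟩
  have := Set.ncard_lt_ncard hss (Set.toFinite _)
  rw [← Nat.card_coe_set_eq, ← Nat.card_coe_set_eq] at this; exact this

theorem commutator_elim_left {z : G} (hz : ∀ g, g * z = z * g) (a b : G) :
    ⁅a * z, b⁆ = ⁅a, b⁆ := by
  have h : z * b * z⁻¹ = b := by rw [← hz b]; group
  calc ⁅a * z, b⁆ = a * (z * b * z⁻¹) * a⁻¹ * b⁻¹ := by
        rw [commutatorElement_def]; group
    _ = ⁅a, b⁆ := by rw [h, commutatorElement_def]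

theorem commutator_elim_right {z : G} (hz : ∀ g, g * z = z * g) (a b : G) :
    ⁅a, b * z⁆ = ⁅a, b⁆ := by
  have h : z * a⁻¹ * z⁻¹ = a⁻¹ := by rw [← hz a⁻¹]; group
  calc ⁅a, b * z⁆ = a * b * (z * a⁻¹ * z⁻¹) * b⁻¹ := by
        rw [commutatorElement_def]; group
    _ = ⁅a, b⁆ := by rw [h, commutatorElement_def]

theorem perfect_of_quasisimple {K : Subgroup G} (hK : IsQuasisimple ↥K) :
    ⁅K, K⁆ = K := by
  have htop : Subgroup.map K.subtype ⊤ = K := by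
    rw [← MonoidHom.range_eq_map, Subgroup.range_subtype]
  have h1 : Subgroup.map K.subtype (commutator ↥K) = ⁅K, K⁆ := by
    rw [commutator_def, Subgroup.map_commutator, htop]
  rw [← h1, hK.1, htop]

/-- A normal subgroup of a quasisimple subgroup is the whole subgroup
or centralizes it. -/
theorem nin_quasisimple {K S : Subgroup G} (hK : IsQuasisimple ↥K) (hS : NIn S K) :
    S = K ∨ S ≤ Subgroup.centralizer (K : Set G) := by
  haveI := hK.2
  set T : Subgroup ↥K := S.subgroupOf K with hT
  have hTn : T.Normal := by
    constructor
    rintro ⟨x, hxK⟩ hx ⟨g, hgK⟩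
    rw [Subgroup.mem_subgroupOf] at hx ⊢
    exact hS.2 g hgK x hx
  have hmap : (T.map (QuotientGroup.mk' (Subgroup.center ↥K))).Normal :=
    hTn.map _ (QuotientGroup.mk'_surjective _)
  rcases hmap.eq_bot_or_eq_top with hbot | htop
  · right
    rw [Subgroup.map_eq_bot_iff, QuotientGroup.ker_mk'] at hbot
    intro s hs
    rw [Subgroup.mem_centralizer_iff]
    intro k hk
    have h1 : (⟨s, hS.1 hs⟩ : ↥K) ∈ Subgroup.center ↥K := by
      apply hbot
      rwa [Subgroup.mem_subgroupOf]
    have h2 := (Subgroup.mem_center_iff.mp h1) ⟨k, hk⟩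
    exact congrArg Subtype.val h2
  · left
    have hsup : T ⊔ Subgroup.center ↥K = ⊤ := by
      rw [eq_top_iff]
      intro k _
      have hmem : QuotientGroup.mk' (Subgroup.center ↥K) k ∈
          T.map (QuotientGroup.mk' (Subgroup.center ↥K)) := htop ▸ Subgroup.mem_top _
      obtain ⟨t, ht, htk⟩ := Subgroup.mem_map.mp hmem
      have hz : t⁻¹ * k ∈ Subgroup.center ↥K := by
        rw [← QuotientGroup.ker_mk' (Subgroup.center ↥K), MonoidHom.mem_ker, map_mul,
          map_inv, htk, inv_mul_cancel]
      have hk2 : k = t * (t⁻¹ * k) := by group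
      rw [hk2]
      exact mul_mem (Subgroup.mem_sup_left ht) (Subgroup.mem_sup_right hz)
    have hdec : ∀ g : ↥K, ∃ t ∈ T, ∃ z ∈ Subgroup.center ↥K, t * z = g := by
      intro g
      have hg : g ∈ ((T ⊔ Subgroup.center ↥K : Subgroup ↥K) : Set ↥K) := by
        rw [hsup]; trivial
      rw [Subgroup.mul_normal] at hg
      exact hg
    have hcomm : commutator ↥K ≤ T := by
      rw [commutator_def, Subgroup.commutator_le]
      intro g1 _ g2 _
      obtain ⟨t1, ht1, z1, hz1, rfl⟩ := hdec g1
      obtain ⟨t2, ht2, z2, hz2, rfl⟩ := hdec g2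
      rw [commutator_elim_left (Subgroup.mem_center_iff.mp hz1),
        commutator_elim_right (Subgroup.mem_center_iff.mp hz2), commutatorElement_def]
      exact mul_mem (mul_mem (mul_mem ht1 ht2) (inv_mem ht1)) (inv_mem ht2)
    rw [hK.1, top_le_iff] at hcomm
    exact le_antisymm hS.1 (Subgroup.subgroupOf_eq_top.mp hcomm)

/-- A proper subnormal subgroup of a quasisimple subgroup centralizes it. -/
theorem chN_quasisimple {K : Subgroup G} (hK : IsQuasisimple ↥K) {n : ℕ} :
    ∀ {S : Subgroup G}, ChN n S K → S = K ∨ S ≤ Subgroup.centralizer (K : Set G) := by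
  induction n with
  | zero => intro S h; exact Or.inl h
  | succ n ih =>
    intro S h
    obtain ⟨M, hc, hM⟩ := h
    rcases nin_quasisimple hK hM with rfl | hcen
    · exact ih hc
    · exact Or.inr ((chN_le hc).trans hcen)

/-- Key lemma: a quasisimple subgroup subnormal in `B` is contained in,
or commutes with, any normal subgroup of `B`. -/
theorem base {G : Type*} [Group G] [Finite G] :
    ∀ (c : ℕ) (B K N : Subgroup G), Nat.card ↥B = c →
      (∃ n, ChN n K B) → IsQuasisimple ↥K → NIn N B → K ≤ N ∨ ⁅K, N⁆ = ⊥ := by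
  intro c
  induction c using Nat.strong_induction_on with
  | _ c IH =>
    rintro B K N hc ⟨n, hchain⟩ hK hN
    rcases chN_cases hchain with rfl | ⟨M, hM, hMB, m, hKM⟩
    · rcases nin_quasisimple hK hN with rfl | hcen
      · exact Or.inl le_rfl
      · right
        rw [Subgroup.commutator_comm]
        exact Subgroup.commutator_eq_bot_iff_le_centralizer.mpr hcen
    · have hKM' : K ≤ M := chN_le hKM
      have hN' : NIn (N ⊓ M) M := by
        refine ⟨inf_le_right, ?_⟩
        intro b hb a ha
        rw [Subgroup.mem_inf] at ha ⊢
        exact ⟨hN.2 b (hM.1 hb) a ha.1, mul_mem (mul_mem hb ha.2) (inv_mem hb)⟩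
      rcases IH (Nat.card ↥M) (hc ▸ card_lt_of_lt hM.1 hMB) M K (N ⊓ M) rfl
          ⟨m, hKM⟩ hK hN' with hle | hbot
      · exact Or.inl (hle.trans inf_le_left)
      · right
        have hcen : N ⊓ M ≤ Subgroup.centralizer (K : Set G) := by
          rw [← Subgroup.commutator_eq_bot_iff_le_centralizer, Subgroup.commutator_comm]
          exact hbot
        have hsub : ⁅K, N⁆ ≤ N ⊓ M := by
          rw [Subgroup.commutator_le]
          intro g1 hg1 g2 hg2
          rw [Subgroup.mem_inf, commutatorElement_def]
          constructor
          · exact mul_mem (hN.2 g1 (hM.1 (hKM' hg1)) g2 hg2) (inv_mem hg2)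
          · have h2 : g2 * g1⁻¹ * g2⁻¹ ∈ M := hM.2 g2 (hN.1 hg2) g1⁻¹ (inv_mem (hKM' hg1))
            have := mul_mem (hKM' hg1) h2
            simpa [mul_assoc] using this
        have h1 : ⁅⁅K, N⁆, K⁆ = ⊥ :=
          Subgroup.commutator_eq_bot_iff_le_centralizer.mpr (hsub.trans hcen)
        have h2 : ⁅⁅N, K⁆, K⁆ = ⊥ := by rwa [Subgroup.commutator_comm N K]
        have h3 := Subgroup.commutator_commutator_eq_bot_of_rotate h1 h2
        rwa [perfect_of_quasisimple hK] at h3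

/-- Relative main theorem: two distinct quasisimple subgroups subnormal in `B`
commute elementwise. -/
theorem main {G : Type*} [Group G] [Finite G] :
    ∀ (c : ℕ) (B Q L : Subgroup G), Nat.card ↥B = c →
      (∃ n, ChN n Q B) → (∃ n, ChN n L B) → IsQuasisimple ↥Q → IsQuasisimple ↥L →
      Q ≠ L → ⁅Q, L⁆ = ⊥ := by
  intro c
  induction c using Nat.strong_induction_on with
  | _ c IH =>
    rintro B Q L hc hQc ⟨nL, hLchain⟩ hQ hL hne
    rcases chN_cases hLchain with rfl | ⟨M, hM, hMB, m, hLM⟩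
    · obtain ⟨nQ, hQchain⟩ := hQc
      rcases chN_quasisimple hL hQchain with h | h
      · exact absurd h hne
      · exact Subgroup.commutator_eq_bot_iff_le_centralizer.mpr h
    · rcases base (Nat.card ↥B) B Q M rfl hQc hQ hM with hle | hbot
      · obtain ⟨nQ, hQchain⟩ := hQc
        have hQM : ChN nQ Q M := by
          have := chN_inf M hQchain
          rwa [inf_eq_left.mpr hle, inf_eq_right.mpr hM.1] at this
        exact IH (Nat.card ↥M) (hc ▸ card_lt_of_lt hM.1 hMB) M Q L rfl
          ⟨nQ, hQM⟩ ⟨m, hLM⟩ hQ hL hne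
      · have hmono : ⁅Q, L⁆ ≤ ⁅Q, M⁆ := Subgroup.commutator_mono le_rfl (chN_le hLM)
        exact le_bot_iff.mp (hbot ▸ hmono)

end ComponentsAux

/-- Two distinct components of a finite group commute elementwise. -/
theorem components_commute {G : Type*} [Group G] [Finite G] (Q L : Subgroup G)
    (hQ : IsComponentFin Q) (hL : IsComponentFin L) (hne : Q ≠ L) :
    ⁅Q, L⁆ = ⊥ :=
  ComponentsAux.main (Nat.card ↥(⊤ : Subgroup G)) ⊤ Q L rfl
    (ComponentsAux.subnormal_chN hQ.1) (ComponentsAux.subnormal_chN hL.1)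
    hQ.2 hL.2 hne
end

section
/- Let G be a finite group, Q a component of G, and P a normal nilpotent subgroup of G. Then [Q, P] = 1; in particular every component of G centralizes the Fitting subgroup F(G). -/
section Aux
open Subgroup

private lemma subsingleton_of_nilpotent_perfect {K : Type*} [Group K]
    (hn : Group.IsNilpotent K) (hp : commutator K = ⊤) : Subsingleton K := by
  haveI := hn
  have h : ∀ n, derivedSeries K n = ⊤ := by
    intro n
    induction n with
    | zero => rfl
    | succ n ih => rw [derivedSeries_succ, ih, ← commutator_def]; exact hp
  obtain ⟨n, hn'⟩ := (isSolvable_def K).mp inferInstance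
  rw [h n] at hn'
  constructor
  intro a b
  have ha : a ∈ (⊥ : Subgroup K) := hn' ▸ Subgroup.mem_top a
  have hb : b ∈ (⊥ : Subgroup K) := hn' ▸ Subgroup.mem_top b
  rw [Subgroup.mem_bot] at ha hb
  rw [ha, hb]

private lemma nilpotent_normal_le_center {H : Type*} [Group H]
    (hqs : IsQuasisimple H) (N : Subgroup H) (hN : N.Normal)
    (hnil : Group.IsNilpotent N) : N ≤ Subgroup.center H := by
  obtain ⟨hperf, hsimple⟩ := hqs
  set π := QuotientGroup.mk' (Subgroup.center H) with hπ
  have hπsurj : Function.Surjective π := QuotientGroup.mk'_surjective _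
  have hmapnormal : (N.map π).Normal := hN.map π hπsurj
  rcases IsSimpleGroup.eq_bot_or_eq_top_of_normal (N.map π) hmapnormal with h | h
  · rw [Subgroup.map_eq_bot_iff] at h
    rwa [hπ, QuotientGroup.ker_mk'] at h
  · exfalso
    have hsurj : Function.Surjective (π.comp N.subtype) := by
      intro x
      have hx : x ∈ N.map π := by rw [h]; exact Subgroup.mem_top x
      obtain ⟨n, hn, rfl⟩ := hx
      exact ⟨⟨n, hn⟩, rfl⟩
    haveI := hnil
    have h1 : Group.IsNilpotent (H ⧸ Subgroup.center H) :=
      nilpotent_of_surjective _ hsurj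
    have h2 : commutator (H ⧸ Subgroup.center H) = ⊤ := by
      have hm := Subgroup.map_commutator (⊤ : Subgroup H) ⊤ π
      rw [← commutator_def, hperf] at hm
      rw [← MonoidHom.range_eq_map, MonoidHom.range_eq_top_of_surjective π hπsurj] at hm
      rw [commutator_def, ← hm]
    have hss := subsingleton_of_nilpotent_perfect h1 h2
    haveI := hsimple.toNontrivial
    exact not_subsingleton _ hss

private lemma conj_mem_of_subgroupOf_normal {G : Type*} [Group G] {H K : Subgroup G}
    (hHK : H ≤ K) (hn : (H.subgroupOf K).Normal) {g x : G} (hg : g ∈ K) (hx : x ∈ H) :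
    g * x * g⁻¹ ∈ H := by
  have := hn.conj_mem ⟨x, hHK hx⟩ (Subgroup.mem_subgroupOf.mpr hx) ⟨g, hg⟩
  simpa [Subgroup.mem_subgroupOf] using this

private lemma key_commutator_bot {G : Type*} [Group G] :
    ∀ (n : ℕ) (s : ℕ → Subgroup G) (Q M P : Subgroup G),
      s 0 = Q → s n = M →
      (∀ i < n, s i ≤ s (i + 1) ∧ ((s i).subgroupOf (s (i + 1))).Normal) →
      IsQuasisimple Q → Group.IsNilpotent P → P ≤ M → M ≤ Subgroup.normalizer (P : Set G) →
      ⁅Q, P⁆ = ⊥ := by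
  intro n
  induction n with
  | zero =>
    intro s Q M P h0 hn hchain hqs hnil hPM hMN
    have hMQ : M = Q := by rw [← hn, h0]
    subst hMQ
    -- P is a nilpotent normal subgroup of the quasisimple group Q
    have hNnorm : (P.subgroupOf M).Normal := by
      constructor
      rintro ⟨x, hxM⟩ hx ⟨g, hgM⟩
      rw [Subgroup.mem_subgroupOf] at hx ⊢
      exact (Subgroup.mem_normalizer_iff.mp (hMN hgM) x).mp hx
    have hNnil : Group.IsNilpotent (P.subgroupOf M) := by
      haveI := hnil
      exact nilpotent_of_mulEquiv (Subgroup.subgroupOfEquivOfLe hPM).symm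
    have hcent : P.subgroupOf M ≤ Subgroup.center M :=
      nilpotent_normal_le_center hqs _ hNnorm hNnil
    rw [eq_bot_iff, Subgroup.commutator_le]
    intro q hq p hp
    have hpM : p ∈ M := hPM hp
    have hmem : (⟨p, hpM⟩ : M) ∈ P.subgroupOf M := Subgroup.mem_subgroupOf.mpr hp
    have hc := Subgroup.mem_center_iff.mp (hcent hmem) ⟨q, hq⟩
    have hc' : q * p = p * q := congrArg Subtype.val hc
    rw [Subgroup.mem_bot, commutatorElement_eq_one_iff_mul_comm]
    exact hc'
  | succ n ih =>
    intro s Q M P h0 hn hchain hqs hnil hPM hMN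
    set M' := s n with hM'
    have hle : M' ≤ M := by rw [← hn]; exact (hchain n (Nat.lt_succ_self n)).1
    have hnorm : (M'.subgroupOf M).Normal := by
      rw [← hn]; exact (hchain n (Nat.lt_succ_self n)).2
    have hmono : ∀ i, i ≤ n → Q ≤ s i := by
      intro i hi
      induction i with
      | zero => rw [h0]
      | succ j ihj =>
        exact (ihj (Nat.le_of_succ_le hi)).trans
          (hchain j (Nat.lt_succ_of_lt (Nat.lt_of_succ_le hi))).1
    have hQM' : Q ≤ M' := hmono n le_rfl
    have hQM : Q ≤ M := hQM'.trans hle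
    -- the smaller normal nilpotent piece
    have hM'normP' : M' ≤ Subgroup.normalizer ((P ⊓ M' : Subgroup G) : Set G) := by
      intro g hg
      have hgM : g ∈ M := hle hg
      rw [Subgroup.mem_normalizer_iff]
      intro x
      constructor
      · rintro ⟨hxP, hxM'⟩
        exact ⟨(Subgroup.mem_normalizer_iff.mp (hMN hgM) x).mp hxP,
          conj_mem_of_subgroupOf_normal hle hnorm hgM hxM'⟩
      · rintro ⟨hxP, hxM'⟩
        refine ⟨(Subgroup.mem_normalizer_iff.mp (hMN hgM) x).mpr hxP, ?_⟩
        have h2 := conj_mem_of_subgroupOf_normal hle hnorm (M.inv_mem hgM) hxM'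
        have he : g⁻¹ * (g * x * g⁻¹) * g⁻¹⁻¹ = x := by group
        rwa [he] at h2
    have hnil' : Group.IsNilpotent (P ⊓ M' : Subgroup G) := by
      haveI := hnil
      exact nilpotent_of_mulEquiv
        (Subgroup.subgroupOfEquivOfLe (inf_le_left : P ⊓ M' ≤ P))
    have hIH : ⁅Q, P ⊓ M'⁆ = ⊥ :=
      ih s Q M' (P ⊓ M') h0 rfl
        (fun i hi => hchain i (Nat.lt_succ_of_lt hi)) hqs hnil' inf_le_right hM'normP'
    -- ⁅Q, P⁆ ≤ P ⊓ M'
    have hQP : ⁅Q, P⁆ ≤ P ⊓ M' := by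
      rw [Subgroup.commutator_le]
      intro q hq p hp
      have hqM' : q ∈ M' := hQM' hq
      have hqM : q ∈ M := hQM hq
      rw [commutatorElement_def, Subgroup.mem_inf]
      constructor
      · have c1 : q * p * q⁻¹ ∈ P := (Subgroup.mem_normalizer_iff.mp (hMN hqM) p).mp hp
        exact P.mul_mem c1 (P.inv_mem hp)
      · have c2 : p * q⁻¹ * p⁻¹ ∈ M' :=
          conj_mem_of_subgroupOf_normal hle hnorm (hPM hp) (M'.inv_mem hqM')
        have he : q * p * q⁻¹ * p⁻¹ = q * (p * q⁻¹ * p⁻¹) := by group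
        rw [he]
        exact M'.mul_mem hqM' c2
    have h1 : ⁅⁅Q, P⁆, Q⁆ = ⊥ := by
      rw [eq_bot_iff]
      calc ⁅⁅Q, P⁆, Q⁆ ≤ ⁅P ⊓ M', Q⁆ := Subgroup.commutator_mono hQP le_rfl
        _ = ⁅Q, P ⊓ M'⁆ := Subgroup.commutator_comm _ _
        _ ≤ ⊥ := hIH.le
    have h2 : ⁅⁅P, Q⁆, Q⁆ = ⊥ := by rwa [Subgroup.commutator_comm P Q]
    have hrot : ⁅⁅Q, Q⁆, P⁆ = ⊥ :=
      Subgroup.commutator_commutator_eq_bot_of_rotate h1 h2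
    have hQQ : ⁅Q, Q⁆ = Q := by
      have hm := Subgroup.map_commutator (⊤ : Subgroup Q) ⊤ Q.subtype
      rw [← _root_.commutator_def, hqs.1, ← MonoidHom.range_eq_map, Subgroup.range_subtype] at hm
      exact hm.symm
    rw [← hQQ]
    exact hrot

end Aux

/-- A component of a finite group commutes with every normal nilpotent subgroup;
in particular it centralizes the Fitting subgroup. -/
theorem component_commutes_with_nilpotent {G : Type*} [Group G] [Finite G]
    (Q P : Subgroup G) (hQ : IsComponentFin Q) (hP : P.Normal)
    (hnil : Group.IsNilpotent P) :
    ⁅Q, P⁆ = ⊥ ∧ ⁅Q, fittingSub G⁆ = ⊥ := by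
  obtain ⟨⟨n, s, h0, hn, hchain⟩, hqs⟩ := hQ
  have main : ∀ P' : Subgroup G, P'.Normal → Group.IsNilpotent P' → ⁅Q, P'⁆ = ⊥ := by
    intro P' hP' hnil'
    exact key_commutator_bot n s Q ⊤ P' h0 hn hchain hqs hnil' le_top
      (Subgroup.normalizer_eq_top_iff.mpr hP').ge
  refine ⟨main P hP hnil, ?_⟩
  rw [Subgroup.commutator_comm, Subgroup.commutator_eq_bot_iff_le_centralizer, fittingSub]
  apply iSup_le
  intro H
  apply iSup_le
  intro hH
  rw [← Subgroup.commutator_eq_bot_iff_le_centralizer, Subgroup.commutator_comm]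
  exact main H hH.1 hH.2
end

section
/- Let G be a finite group. Then every minimal normal subgroup N of G is either abelian or contained in E(G), the subgroup generated by the components of G. In particular F*(G) ≠ 1 whenever G ≠ 1. -/
/-! ### Auxiliary lemmas -/

section Aux

lemma isSimpleGroup_of_mulEquiv {A B : Type*} [Group A] [Group B] (e : A ≃* B)
    (h : IsSimpleGroup A) : IsSimpleGroup B := by
  haveI : Nontrivial A := h.toNontrivial
  haveI : Nontrivial B := e.symm.toEquiv.nontrivial
  refine ⟨fun H hH => ?_⟩
  rcases h.eq_bot_or_eq_top_of_normal (H.comap e.toMonoidHom) (hH.comap _) with h1 | h1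
  · left
    have := congrArg (Subgroup.map (e.toMonoidHom)) h1
    rwa [Subgroup.map_comap_eq_self_of_surjective e.surjective, Subgroup.map_bot] at this
  · right
    have := congrArg (Subgroup.map (e.toMonoidHom)) h1
    rwa [Subgroup.map_comap_eq_self_of_surjective e.surjective,
      Subgroup.map_top_of_surjective _ e.surjective] at this

lemma map_center_mulEquiv {A B : Type*} [Group A] [Group B] (e : A ≃* B) :
    (Subgroup.center A).map e.toMonoidHom = Subgroup.center B := by
  ext b
  simp only [Subgroup.mem_map, Subgroup.mem_center_iff, MulEquiv.coe_toMonoidHom]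
  constructor
  · rintro ⟨a, ha, rfl⟩ c
    calc c * e a = e (e.symm c * a) := by simp
      _ = e (a * e.symm c) := by rw [ha (e.symm c)]
      _ = e a * c := by simp
  · intro hb
    refine ⟨e.symm b, fun a => e.injective ?_, by simp⟩
    simp only [map_mul, MulEquiv.apply_symm_apply]
    exact hb (e a)

lemma isQuasisimple_of_mulEquiv {A B : Type*} [Group A] [Group B] (e : A ≃* B)
    (h : IsQuasisimple A) : IsQuasisimple B := by
  obtain ⟨hc, hs⟩ := h
  constructor
  · have hmap : (commutator A).map e.toMonoidHom = commutator B := by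
      rw [commutator_def, commutator_def, Subgroup.map_commutator,
        Subgroup.map_top_of_surjective _ e.surjective]
    rw [← hmap, hc, Subgroup.map_top_of_surjective _ e.surjective]
  · exact isSimpleGroup_of_mulEquiv (QuotientGroup.congr _ _ e (map_center_mulEquiv e)) hs

variable {G : Type*} [Group G]

lemma IsSubnormalSub.conj {K : Subgroup G} (h : IsSubnormalSub K) (g : G) :
    IsSubnormalSub (K.map (MulAut.conj g).toMonoidHom) := by
  obtain ⟨n, s, h0, hn, hstep⟩ := h
  refine ⟨n, fun i => (s i).map (MulAut.conj g).toMonoidHom, by simp only [h0], ?_, ?_⟩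
  · simp only [hn]
    exact Subgroup.map_top_of_surjective _ (MulAut.conj g).surjective
  · intro i hi
    obtain ⟨hle, hnorm⟩ := hstep i hi
    refine ⟨Subgroup.map_mono hle, ?_⟩
    rw [Subgroup.normal_subgroupOf_iff (Subgroup.map_mono hle)]
    rintro h' k' ⟨a, ha, rfl⟩ ⟨b, hb, rfl⟩
    rw [Subgroup.normal_subgroupOf_iff hle] at hnorm
    refine ⟨b * a * b⁻¹, hnorm a b ha hb, ?_⟩
    rw [map_mul, map_mul, map_inv]

lemma subnormal_prepend {K : Subgroup G} (hK : IsSubnormalSub K) {L : Subgroup K}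
    (hL : L.Normal) : IsSubnormalSub (L.map K.subtype) := by
  obtain ⟨n, s, h0, hn, hstep⟩ := hK
  refine ⟨n + 1, fun i => match i with | 0 => L.map K.subtype | (j+1) => s j, rfl, ?_, ?_⟩
  · show s n = ⊤
    exact hn
  · intro i hi
    match i with
    | 0 =>
      show L.map K.subtype ≤ s 0 ∧ ((L.map K.subtype).subgroupOf (s 0)).Normal
      rw [h0]
      refine ⟨Subgroup.map_subtype_le L, ?_⟩
      have hK' : (L.map K.subtype).subgroupOf K = L :=
        Subgroup.comap_map_eq_self_of_injective K.subtype_injective L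
      rw [hK']
      exact hL
    | (j+1) =>
      show s j ≤ s (j + 1) ∧ ((s j).subgroupOf (s (j + 1))).Normal
      exact hstep j (by omega)

/-- The set of `p`-subgroups of `G` contained in `H` and normalized by `H`. -/
def pSetIn (p : ℕ) (H : Subgroup G) : Set (Subgroup G) :=
  {P | P ≤ H ∧ (∀ x ∈ H, ∀ a ∈ P, x * a * x⁻¹ ∈ P) ∧ IsPGroup p P}

/-- The `p`-core of `H`: join of all such subgroups. -/
def pCoreIn (p : ℕ) (H : Subgroup G) : Subgroup G := ⨆ P ∈ pSetIn p H, P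

lemma le_pCoreIn {p : ℕ} {H P : Subgroup G} (hP : P ∈ pSetIn p H) : P ≤ pCoreIn p H :=
  show P ≤ ⨆ P ∈ pSetIn p H, P from le_biSup (fun P => P) hP

lemma pCoreIn_le {p : ℕ} {H : Subgroup G} : pCoreIn p H ≤ H :=
  iSup₂_le fun _ hP => hP.1

lemma mem_pCoreIn_conj {p : ℕ} {H : Subgroup G} {x : G}
    (hx : ∀ a ∈ H, x * a * x⁻¹ ∈ H) (hx' : ∀ a ∈ H, x⁻¹ * a * x ∈ H)
    {a : G} (ha : a ∈ pCoreIn p H) : x * a * x⁻¹ ∈ pCoreIn p H := by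
  have key : (pCoreIn p H).map (MulAut.conj x).toMonoidHom ≤ pCoreIn p H := by
    unfold pCoreIn
    simp only [Subgroup.map_iSup]
    refine iSup₂_le fun P hP => ?_
    refine le_pCoreIn ⟨?_, ?_, ?_⟩
    · rintro _ ⟨a, ha, rfl⟩
      simpa using hx a (hP.1 ha)
    · rintro y hy _ ⟨a, ha, rfl⟩
      refine ⟨(x⁻¹ * y * x) * a * (x⁻¹ * y * x)⁻¹, hP.2.1 _ (hx' y hy) a ha, ?_⟩
      simp only [MulEquiv.coe_toMonoidHom, MulAut.conj_apply]
      group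
    · exact hP.2.2.map _
  exact key ⟨a, ha, by simp⟩

lemma pCoreIn_isPGroup (p : ℕ) [Fact p.Prime] [Finite G] (H : Subgroup G) :
    IsPGroup p (pCoreIn p H) := by
  obtain ⟨R⟩ := (inferInstance : Nonempty (Sylow p H))
  have hmain : pCoreIn p H ≤ ((R : Subgroup H)).map H.subtype := by
    refine iSup₂_le fun P hP => ?_
    have hPH : P ≤ H := hP.1
    have hnorm : (P.subgroupOf H).Normal := (Subgroup.normal_subgroupOf_iff hPH).mpr
      (fun h k hh hk => hP.2.1 k hk h hh)
    have hPp : IsPGroup p (P.subgroupOf H) :=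
      hP.2.2.of_equiv (Subgroup.subgroupOfEquivOfLe hPH).symm
    haveI := hnorm
    have hsup : IsPGroup p ((R : Subgroup H) ⊔ P.subgroupOf H : Subgroup H) :=
      IsPGroup.to_sup_of_normal_right R.isPGroup' hPp
    have heq := R.is_maximal' hsup le_sup_left
    have hle : P.subgroupOf H ≤ (R : Subgroup H) := by
      rw [← heq]; exact le_sup_right
    calc P = (P.subgroupOf H).map H.subtype := by
          rw [Subgroup.subgroupOf_map_subtype, inf_eq_left.mpr hPH]
      _ ≤ ((R : Subgroup H)).map H.subtype := Subgroup.map_mono hle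
  exact (R.isPGroup'.map H.subtype).to_le hmain

lemma subnormal_pgroup_le_pCore {p : ℕ} [Fact p.Prime] [Finite G] {K : Subgroup G}
    (hs : IsSubnormalSub K) (hp : IsPGroup p K) : K ≤ pCoreIn p (⊤ : Subgroup G) := by
  obtain ⟨n, s, h0, hn, hstep⟩ := hs
  have key : ∀ i, i ≤ n → K ≤ pCoreIn p (s i) := by
    intro i
    induction i with
    | zero =>
      intro _
      refine le_pCoreIn ?_
      rw [h0]
      exact ⟨le_rfl, fun x hx a ha => mul_mem (mul_mem hx ha) (inv_mem hx), hp⟩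
    | succ i ih =>
      intro hin
      have hi : i < n := lt_of_lt_of_le (Nat.lt_succ_self i) hin
      obtain ⟨hle, hnorm⟩ := hstep i hi
      rw [Subgroup.normal_subgroupOf_iff hle] at hnorm
      refine (ih (le_of_lt hi)).trans
        (le_pCoreIn ⟨pCoreIn_le.trans hle, ?_, pCoreIn_isPGroup p (s i)⟩)
      intro x hx a ha
      refine mem_pCoreIn_conj (fun b hb => hnorm b x hb hx) (fun b hb => ?_) ha
      have := hnorm b x⁻¹ hb (inv_mem hx)
      simpa using this
  have := key n le_rfl
  rwa [hn] at this

lemma pCore_top_normal (p : ℕ) : (pCoreIn p (⊤ : Subgroup G)).Normal := by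
  constructor
  intro a ha g
  exact mem_pCoreIn_conj (fun _ _ => Subgroup.mem_top _) (fun _ _ => Subgroup.mem_top _) ha

end Aux

/-- A minimal normal subgroup of a finite group is abelian or lies in the layer;
in particular `F*(G)` is nontrivial whenever `G` is. -/
theorem minimal_normal_abelian_or_in_layer (G : Type*) [Group G] [Finite G]
    (N : Subgroup G) (hN : N.Normal) (hbot : N ≠ ⊥)
    (hmin : ∀ M : Subgroup G, M.Normal → M ≤ N → M = ⊥ ∨ M = N) :
    ((∀ x ∈ N, ∀ y ∈ N, x * y = y * x) ∨ N ≤ layerSub G) ∧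
      (Nontrivial G → fstarSub G ≠ ⊥) := by
  have main : (∀ x ∈ N, ∀ y ∈ N, x * y = y * x) ∨ N ≤ layerSub G := by
    by_cases hC : N ⊓ Subgroup.centralizer (N : Set G) = ⊥
    case neg =>
      left
      have hCnorm : (N ⊓ Subgroup.centralizer (N : Set G)).Normal := by
        constructor
        rintro a ⟨haN, haC⟩ g
        refine ⟨hN.conj_mem a haN g, Subgroup.mem_centralizer_iff.mpr ?_⟩
        intro y hy
        have hyg : g⁻¹ * y * g ∈ N := by
          have := hN.conj_mem y hy g⁻¹
          simpa using this
        have h1 : (g⁻¹ * y * g) * a = a * (g⁻¹ * y * g) :=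
          Subgroup.mem_centralizer_iff.mp haC _ hyg
        calc y * (g * a * g⁻¹) = g * ((g⁻¹ * y * g) * a) * g⁻¹ := by group
          _ = g * (a * (g⁻¹ * y * g)) * g⁻¹ := by rw [h1]
          _ = (g * a * g⁻¹) * y := by group
      rcases hmin _ hCnorm inf_le_left with h | h
      · exact absurd h hC
      · intro x hx y hy
        have hx' : x ∈ N ⊓ Subgroup.centralizer (N : Set G) := by rw [h]; exact hx
        exact (Subgroup.mem_centralizer_iff.mp hx'.2 y hy).symm
    case pos =>
      right
      -- choose a minimal nontrivial subnormal subgroup of G contained in N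
      set S : Set (Subgroup G) := {H : Subgroup G | H ≠ ⊥ ∧ IsSubnormalSub H ∧ H ≤ N} with hSdef
      have hNsub : IsSubnormalSub N := by
        refine ⟨1, fun i => match i with | 0 => N | (_+1) => ⊤, rfl, rfl, ?_⟩
        intro i hi
        have hi0 : i = 0 := by omega
        subst hi0
        exact ⟨le_top, hN.subgroupOf ⊤⟩
      have hNS : N ∈ S := ⟨hbot, hNsub, le_rfl⟩
      have hne : {m | ∃ H ∈ S, Nat.card H = m}.Nonempty := ⟨Nat.card N, N, hNS, rfl⟩
      obtain ⟨K, hKS, hKcard⟩ := Nat.sInf_mem hne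
      obtain ⟨hK0, hKsub, hKN⟩ := hKS
      have hKmin : ∀ H ∈ S, H ≤ K → H = K := by
        intro H hH hle
        refine Subgroup.eq_of_le_of_card_ge hle ?_
        rw [hKcard]
        exact Nat.sInf_le ⟨H, hH, rfl⟩
      haveI hKnt : Nontrivial K := (Subgroup.nontrivial_iff_ne_bot K).mpr hK0
      have hsimple : IsSimpleGroup K := by
        constructor
        intro H hHnorm
        by_cases hHbot : H.map K.subtype = ⊥
        · left
          exact (Subgroup.map_eq_bot_iff_of_injective H (K.subtype_injective)).mp hHbot
        · right
          have hmem : H.map K.subtype ∈ S :=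
            ⟨hHbot, subnormal_prepend hKsub hHnorm, (Subgroup.map_subtype_le H).trans hKN⟩
          have heq := hKmin _ hmem (Subgroup.map_subtype_le H)
          have htop : Subgroup.map K.subtype ⊤ = K := by
            rw [← MonoidHom.range_eq_map, Subgroup.range_subtype]
          apply Subgroup.map_injective K.subtype_injective
          rw [heq, htop]
      by_cases hab : ∀ x y : K, x * y = y * x
      · -- K abelian: leads to a contradiction with `hC`
        exfalso
        have hcard1 : Nat.card K ≠ 1 := by
          have : 1 < Nat.card K := Finite.one_lt_card
          omega
        obtain ⟨p, hp, hdvd⟩ := Nat.exists_prime_and_dvd hcard1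
        haveI : Fact p.Prime := ⟨hp⟩
        letI : Fintype K := Fintype.ofFinite K
        obtain ⟨x, hx⟩ := exists_prime_orderOf_dvd_card (G := K) p
          (by rwa [← Nat.card_eq_fintype_card])
        have hznorm : (Subgroup.zpowers x).Normal := by
          constructor
          intro a ha g
          have : g * a * g⁻¹ = a := by rw [hab g a]; group
          rwa [this]
        have hz : Subgroup.zpowers x = ⊤ := by
          rcases hsimple.eq_bot_or_eq_top_of_normal _ hznorm with h | h
          · exfalso
            have hx1 : x = 1 := by
              have := Subgroup.mem_zpowers x
              rw [h] at this
              simpa using this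
            rw [hx1, orderOf_one] at hx
            exact hp.one_lt.ne' hx.symm
          · exact h
        have hcard : Nat.card K = p := by
          have h1 : Nat.card (Subgroup.zpowers x) = p := by rw [Nat.card_zpowers, hx]
          rw [hz] at h1
          rwa [Subgroup.card_top] at h1
        have hpK : IsPGroup p K := IsPGroup.of_card (by rw [hcard, pow_one])
        have hKcore : K ≤ pCoreIn p (⊤ : Subgroup G) := subnormal_pgroup_le_pCore hKsub hpK
        set W := pCoreIn p (⊤ : Subgroup G) with hWdef
        have hWn : W.Normal := pCore_top_normal p
        have hM : (W ⊓ N).Normal :=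
          ⟨fun a ha g => ⟨hWn.conj_mem _ ha.1 g, hN.conj_mem _ ha.2 g⟩⟩
        rcases hmin (W ⊓ N) hM inf_le_right with h | h
        · exact hK0 (le_bot_iff.mp (h ▸ le_inf hKcore hKN))
        · have hNW : N ≤ W := inf_eq_right.mp h
          have hNp : IsPGroup p N := (pCoreIn_isPGroup p ⊤).to_le hNW
          haveI : Nontrivial N := (Subgroup.nontrivial_iff_ne_bot N).mpr hbot
          haveI := hNp.center_nontrivial
          obtain ⟨z, hz1⟩ := exists_ne (1 : Subgroup.center N)
          have hzc : ((z : N) : G) ∈ N ⊓ Subgroup.centralizer (N : Set G) := by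
            refine ⟨(z : N).2, Subgroup.mem_centralizer_iff.mpr ?_⟩
            intro y hy
            have := Subgroup.mem_center_iff.mp z.2 ⟨y, hy⟩
            exact congrArg Subtype.val this
          rw [hC] at hzc
          apply hz1
          have : ((z : N) : G) = 1 := by simpa using hzc
          have h2 : (z : N) = 1 := Subtype.ext this
          exact Subtype.ext h2
      · -- K nonabelian simple, hence quasisimple; conjugates are components generating N
        have hKq : IsQuasisimple K := by
          constructor
          · rcases hsimple.eq_bot_or_eq_top_of_normal (commutator K)
              (Subgroup.commutator_normal ⊤ ⊤) with h | h
            · exfalso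
              apply hab
              intro a b
              have := Subgroup.commutator_eq_bot_iff_le_centralizer.mp h
                (Subgroup.mem_top a)
              have hcomm := Subgroup.mem_centralizer_iff.mp this b (Subgroup.mem_top b)
              exact hcomm.symm
            · exact h
          · have hcenter : Subgroup.center K = ⊥ := by
              rcases hsimple.eq_bot_or_eq_top_of_normal (Subgroup.center K)
                inferInstance with h | h
              · exact h
              · exfalso
                apply hab
                intro a b
                have : a ∈ Subgroup.center K := h ▸ Subgroup.mem_top a
                exact (Subgroup.mem_center_iff.mp this b).symm
            exact isSimpleGroup_of_mulEquiv
              (((QuotientGroup.quotientMulEquivOfEq hcenter).trans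
                (QuotientGroup.quotientBot (G := K))).symm) hsimple
        have hcomp : ∀ g : G, IsComponentFin (K.map (MulAut.conj g).toMonoidHom) := fun g =>
          ⟨hKsub.conj g,
            isQuasisimple_of_mulEquiv
              (Subgroup.equivMapOfInjective K _ (MulAut.conj g).injective) hKq⟩
        have hle_layer : ∀ g : G, K.map (MulAut.conj g).toMonoidHom ≤ layerSub G := fun g =>
          show _ ≤ ⨆ Q ∈ {Q : Subgroup G | IsComponentFin Q}, Q from
            le_biSup (fun Q => Q) (hcomp g)
        set L := ⨆ g : G, K.map (MulAut.conj g).toMonoidHom with hLdef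
        have hKL : K ≤ L := by
          intro a ha
          have : a ∈ K.map (MulAut.conj (1 : G)).toMonoidHom := ⟨a, ha, by simp⟩
          exact le_iSup (fun g => K.map (MulAut.conj g).toMonoidHom) (1 : G) this
        have hLnorm : L.Normal := by
          constructor
          intro a ha g
          refine Subgroup.iSup_induction _ (C := fun y => g * y * g⁻¹ ∈ L) ha ?_ ?_ ?_
          · rintro h _ ⟨b, hb, rfl⟩
            have hmem : g * ((MulAut.conj h).toMonoidHom b) * g⁻¹ ∈
                K.map (MulAut.conj (g * h)).toMonoidHom := by
              refine ⟨b, hb, ?_⟩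
              simp only [MulEquiv.coe_toMonoidHom, MulAut.conj_apply]
              group
            exact le_iSup (fun g => K.map (MulAut.conj g).toMonoidHom) (g * h) hmem
          · simpa using one_mem L
          · intro x y hx hy
            have hxy : g * (x * y) * g⁻¹ = (g * x * g⁻¹) * (g * y * g⁻¹) := by group
            rw [hxy]
            exact mul_mem hx hy
        have hLN : L ≤ N := by
          refine iSup_le fun g => ?_
          rintro _ ⟨b, hb, rfl⟩
          simpa using hN.conj_mem b (hKN hb) g
        rcases hmin L hLnorm hLN with h | h
        · exact absurd (le_bot_iff.mp (h ▸ hKL)) hK0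
        · rw [← h]
          exact iSup_le hle_layer
  refine ⟨main, fun _ hF => ?_⟩
  rw [fstarSub, sup_eq_bot_iff] at hF
  rcases main with hab | hlay
  · have hnil : Group.IsNilpotent N := by
      letI : CommGroup N :=
        { (inferInstance : Group N) with
          mul_comm := fun a b => Subtype.ext (hab a a.2 b b.2) }
      infer_instance
    have hfit : N ≤ fittingSub G := by
      show N ≤ ⨆ H ∈ {H : Subgroup G | H.Normal ∧ Group.IsNilpotent H}, H
      exact le_biSup (fun H => H) (Set.mem_setOf.mpr ⟨hN, hnil⟩)
    exact hbot (le_bot_iff.mp (hF.1 ▸ hfit))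
  · exact hbot (le_bot_iff.mp (hF.2 ▸ hlay))
end

section
/- Let G be a profinite group, K a closed normal subgroup of G, and suppose K is an F*-group and N is any open normal subgroup of G. Then the image KN/N is contained in F*(G/N). -/
/-- A topological (profinite) group is pro-`π` if every prime dividing the order of a
finite quotient by an open normal subgroup lies in `π`. -/
def IsProPi (π : Set ℕ) (G : Type*) [Group G] [TopologicalSpace G] : Prop :=
  ∀ N : Subgroup G, N.Normal → IsOpen (N : Set G) →
    ∀ p : ℕ, p.Prime → p ∣ Nat.card (G ⧸ N) → p ∈ π

/-- A topological group is pronilpotent if all its quotients by open normal subgroups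
are nilpotent. -/
def IsPronilpotent (G : Type*) [Group G] [TopologicalSpace G] : Prop :=
  ∀ (N : Subgroup G) (hN : N.Normal), IsOpen (N : Set G) →
    haveI := hN
    Group.IsNilpotent (G ⧸ N)

/-- A component of a profinite group: a finite closed subnormal quasisimple subgroup. -/
def IsComponentPro {G : Type*} [Group G] [TopologicalSpace G] (Q : Subgroup G) : Prop :=
  IsSubnormalSub Q ∧ IsClosed (Q : Set G) ∧ Finite Q ∧ IsQuasisimple Q

/-- The generalised Fitting subgroup of a topological group: the closed subgroup
generated by all closed normal pronilpotent subgroups and all components. -/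
def genFitting (G : Type*) [Group G] [TopologicalSpace G] [IsTopologicalGroup G] : Subgroup G :=
  (⨆ H ∈ {H : Subgroup G | (H.Normal ∧ IsClosed (H : Set G) ∧ IsPronilpotent H) ∨
      IsComponentPro H}, H).topologicalClosure

/-- A topological group is Fitting-degenerate if its generalised Fitting subgroup is trivial. -/
def FittingDegenerate (G : Type*) [Group G] [TopologicalSpace G] [IsTopologicalGroup G] : Prop :=
  genFitting G = ⊥

/-- A topological group is Fitting-regular if no nontrivial quotient by a closed normal
subgroup is Fitting-degenerate. -/
def FittingRegular (G : Type*) [Group G] [TopologicalSpace G] [IsTopologicalGroup G] : Prop :=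
  ∀ (N : Subgroup G) (hN : N.Normal), IsClosed (N : Set G) → N ≠ ⊤ →
    haveI := hN
    ¬ FittingDegenerate (G ⧸ N)

open Subgroup

section PCore

variable {F : Type*} [Group F] (p : ℕ)

/-- The set of normal `p`-subgroups. -/
def myPCoreSet (X : Type*) [Group X] : Set (Subgroup X) :=
  {P : Subgroup X | P.Normal ∧ IsPGroup p ↥P}

/-- The `p`-core of a group. -/
def myPCore (X : Type*) [Group X] : Subgroup X := sSup (myPCoreSet p X)

theorem myPCore_mem (X : Type*) [Group X] [Finite X] [Fact p.Prime] :
    myPCore p X ∈ myPCoreSet p X := by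
  have hbot : (⊥ : Subgroup X) ∈ myPCoreSet p X := ⟨inferInstance, IsPGroup.of_bot⟩
  have hsup : ∀ P ∈ myPCoreSet p X, ∀ Q ∈ myPCoreSet p X, P ⊔ Q ∈ myPCoreSet p X := by
    rintro P ⟨hPn, hPp⟩ Q ⟨hQn, hQp⟩
    haveI := hPn; haveI := hQn
    exact ⟨inferInstance, IsPGroup.to_sup_of_normal_right hPp hQp⟩
  haveI : Finite (Subgroup X) := inferInstance
  obtain ⟨m, hm, hmax⟩ := Set.Finite.exists_maximalFor id (myPCoreSet p X)
    (Set.toFinite _) ⟨⊥, hbot⟩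
  have hub : ∀ P ∈ myPCoreSet p X, P ≤ m := by
    intro P hP
    have := hmax (hsup P hP m hm) (le_sup_right (a := P))
    simp only [id] at this
    exact le_sup_left.trans this
  have : myPCore p X = m := le_antisymm (sSup_le hub) (le_sSup hm)
  rw [this]; exact hm

theorem le_myPCore {X : Type*} [Group X] {P : Subgroup X} (hPn : P.Normal)
    (hPp : IsPGroup p ↥P) : P ≤ myPCore p X :=
  le_sSup ⟨hPn, hPp⟩

theorem myPCore_map_le {X Y : Type*} [Group X] [Group Y] (e : X ≃* Y) :
    (myPCore p X).map e.toMonoidHom ≤ myPCore p Y := by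
  rw [map_le_iff_le_comap]
  refine sSup_le fun P hP => ?_
  rw [← map_le_iff_le_comap]
  exact le_sSup ⟨hP.1.map e.toMonoidHom e.surjective,
    hP.2.map e.toMonoidHom⟩

end PCore

section Op

variable {F : Type*} [Group F] (p : ℕ)

/-- `A` is a subgroup of `B` normalized by `B`. -/
def normIn (A B : Subgroup F) : Prop :=
  A ≤ B ∧ ∀ b ∈ B, ∀ a ∈ A, b * a * b⁻¹ ∈ A

/-- Relative p-core. -/
def Op (A : Subgroup F) : Subgroup F := (myPCore p ↥A).map A.subtype

theorem Op_le (A : Subgroup F) : Op p A ≤ A := map_subtype_le _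

theorem isPGroup_Op [Finite F] [Fact p.Prime] (A : Subgroup F) : IsPGroup p ↥(Op p A) :=
  (myPCore_mem p ↥A).2.map A.subtype

theorem le_Op_of_normIn {P A : Subgroup F} (hPp : IsPGroup p ↥P) (h : normIn P A) :
    P ≤ Op p A := by
  have hsub : (P.subgroupOf A).Normal := by
    constructor
    intro n hn g
    rw [Subgroup.mem_subgroupOf] at hn ⊢
    exact h.2 g g.2 n hn
  have hp' : IsPGroup p ↥(P.subgroupOf A) :=
    hPp.of_equiv (Subgroup.subgroupOfEquivOfLe h.1).symm
  have h1 : P.subgroupOf A ≤ myPCore p ↥A := le_myPCore p hsub hp'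
  have h2 : (P.subgroupOf A).map A.subtype ≤ Op p A := Subgroup.map_mono h1
  rwa [Subgroup.subgroupOf_map_subtype, inf_eq_left.mpr h.1] at h2

theorem normIn_Op {A B : Subgroup F} (h : normIn A B) : normIn (Op p A) B := by
  refine ⟨(Op_le p A).trans h.1, ?_⟩
  intro b hb a ha
  obtain ⟨x, hx, rfl⟩ := ha
  let e : ↥A ≃* ↥A :=
    { toFun := fun x => ⟨b * x * b⁻¹, h.2 b hb x x.2⟩
      invFun := fun x => ⟨b⁻¹ * x * b, by
        have := h.2 b⁻¹ (inv_mem hb) x x.2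
        simpa using this⟩
      left_inv := fun x => by ext; simp [mul_assoc]
      right_inv := fun x => by ext; simp [mul_assoc]
      map_mul' := fun x y => by ext; simp [mul_assoc] }
  have hex : e x ∈ myPCore p ↥A :=
    myPCore_map_le p e (Subgroup.mem_map_of_mem _ hx)
  exact ⟨e x, hex, rfl⟩

end Op

section Chain

variable {F : Type*} [Group F] (p : ℕ)

theorem Op_top_le_fitting [Finite F] [Fact p.Prime] : Op p (⊤ : Subgroup F) ≤ fittingSub F := by
  have htop : normIn (⊤ : Subgroup F) ⊤ := ⟨le_rfl, fun b _ a _ => Subgroup.mem_top _⟩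
  have h4 : normIn (Op p (⊤ : Subgroup F)) ⊤ := normIn_Op p htop
  have hnorm : (Op p (⊤ : Subgroup F)).Normal :=
    ⟨fun n hn g => h4.2 g (Subgroup.mem_top g) n hn⟩
  have hnil : Group.IsNilpotent ↥(Op p (⊤ : Subgroup F)) := (isPGroup_Op p ⊤).isNilpotent
  have hmem : Op p (⊤ : Subgroup F) ∈ {H : Subgroup F | H.Normal ∧ Group.IsNilpotent H} :=
    ⟨hnorm, hnil⟩
  show Op p (⊤ : Subgroup F) ≤ ⨆ H ∈ {H : Subgroup F | H.Normal ∧ Group.IsNilpotent H}, H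
  exact le_biSup id hmem

theorem le_fitting_of_pchain [Finite F] [Fact p.Prime] {P H K : Subgroup F}
    (hPp : IsPGroup p ↥P) (h1 : normIn P H) (h2 : normIn H K) (h3 : normIn K ⊤) :
    P ≤ fittingSub F := by
  have s1 : P ≤ Op p H := le_Op_of_normIn p hPp h1
  have s2 : Op p H ≤ Op p K := le_Op_of_normIn p (isPGroup_Op p H) (normIn_Op p h2)
  have s3 : Op p K ≤ Op p ⊤ := le_Op_of_normIn p (isPGroup_Op p K) (normIn_Op p h3)
  exact s1.trans (s2.trans (s3.trans (Op_top_le_fitting p)))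

end Chain

theorem mem_of_forall_primePow {F : Type*} [Group F] [Finite F] (T : Subgroup F)
    (hT : ∀ p : ℕ, p.Prime → ∀ x : F, (∃ k, orderOf x = p ^ k) → x ∈ T) (x : F) : x ∈ T := by
  suffices h : ∀ n, ∀ x : F, orderOf x = n → x ∈ T from h _ x rfl
  intro n
  induction n using Nat.strong_induction_on with
  | _ n ih =>
    intro x hx
    rcases eq_or_ne n 1 with h1 | h1
    · have : x = 1 := orderOf_eq_one_iff.mp (by rw [hx, h1])
      rw [this]; exact T.one_mem
    · have hn0 : n ≠ 0 := by
        have h := orderOf_pos x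
        rw [hx] at h
        omega
      set p := n.minFac with hpdef
      have hp : p.Prime := Nat.minFac_prime h1
      have hpd : p ∣ n := Nat.minFac_dvd n
      set k := n.factorization p with hkdef
      set m := ordCompl[p] n with hmdef
      have hk0 : 0 < k := hp.factorization_pos_of_dvd hn0 hpd
      have hnm : p ^ k * m = n := Nat.ordProj_mul_ordCompl_eq_self n p
      have hm0 : 0 < m := Nat.ordCompl_pos p hn0
      have hco : (p ^ k).Coprime m := (Nat.coprime_ordCompl hp hn0).pow_left k
      obtain ⟨a, ha1, ha2⟩ := Nat.chineseRemainder hco 1 0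
      obtain ⟨b, hb1, hb2⟩ := Nat.chineseRemainder hco 0 1
      have hsum : a + b ≡ 1 [MOD n] := by
        rw [← hnm]
        refine (Nat.modEq_and_modEq_iff_modEq_mul hco).mp ⟨?_, ?_⟩
        · simpa using ha1.add hb1
        · simpa using ha2.add hb2
      have hxab : x = x ^ a * x ^ b := by
        rw [← pow_add]
        conv_lhs => rw [← pow_one x]
        exact (pow_eq_pow_iff_modEq.mpr (by rw [hx]; exact hsum.symm))
      have hma : m ∣ a := (Nat.modEq_zero_iff_dvd).mp ha2
      have hpb : p ^ k ∣ b := (Nat.modEq_zero_iff_dvd).mp hb1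
      have hyT : x ^ a ∈ T := by
        refine hT p hp _ ?_
        obtain ⟨b', rfl⟩ := hma
        have hpow : (x ^ (m * b')) ^ (p ^ k) = 1 := by
          rw [← pow_mul]
          have : m * b' * p ^ k = n * b' := by rw [← hnm]; ring
          rw [this, pow_mul, ← hx, pow_orderOf_eq_one, one_pow]
        obtain ⟨j, _, hj⟩ := (Nat.dvd_prime_pow hp).mp (orderOf_dvd_of_pow_eq_one hpow)
        exact ⟨j, hj⟩
      have hzT : x ^ b ∈ T := by
        obtain ⟨a', rfl⟩ := hpb
        have hpow : (x ^ (p ^ k * a')) ^ m = 1 := by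
          rw [← pow_mul]
          have : p ^ k * a' * m = n * a' := by rw [← hnm]; ring
          rw [this, pow_mul, ← hx, pow_orderOf_eq_one, one_pow]
        have hdvd : orderOf (x ^ (p ^ k * a')) ∣ m := orderOf_dvd_of_pow_eq_one hpow
        have hlt : orderOf (x ^ (p ^ k * a')) < n := by
          have h1' : orderOf (x ^ (p ^ k * a')) ≤ m := Nat.le_of_dvd hm0 hdvd
          have h2' : m < n := by
            have hpk : 1 < p ^ k := Nat.one_lt_pow (by omega) hp.one_lt
            calc m = 1 * m := (one_mul m).symm
            _ < p ^ k * m := (Nat.mul_lt_mul_right hm0).mpr hpk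
            _ = n := hnm
          omega
        exact ih _ hlt _ rfl
      rw [hxab]
      exact T.mul_mem hyT hzT

theorem nilpotent_normIn_le_fitting {F : Type*} [Group F] [Finite F] {H K : Subgroup F}
    (hnil : Group.IsNilpotent ↥H) (h2 : normIn H K) (h3 : normIn K ⊤) :
    H ≤ fittingSub F := by
  intro x hx
  have key : ∀ p : ℕ, p.Prime → ∀ y : ↥H, (∃ k, orderOf y = p ^ k) →
      y ∈ (fittingSub F).comap H.subtype := by
    rintro p hp y ⟨k, hk⟩
    haveI : Fact p.Prime := ⟨hp⟩
    have hzp : IsPGroup p ↥(Subgroup.zpowers y) := by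
      rw [IsPGroup.iff_card]
      exact ⟨k, by rw [Nat.card_zpowers, hk]⟩
    obtain ⟨Q, hQ⟩ := hzp.exists_le_sylow
    have htfae : Group.IsNilpotent ↥H ↔
        ∀ (q : ℕ) (_ : Fact q.Prime) (Q : Sylow q ↥H), (↑Q : Subgroup ↥H).Normal :=
      (isNilpotent_of_finite_tfae (G := ↥H)).out 0 3
    have hQn : (Q : Subgroup ↥H).Normal := (htfae.mp hnil) p ⟨hp⟩ Q
    set P := (Q : Subgroup ↥H).map H.subtype with hPdef
    have hPp : IsPGroup p ↥P := Q.isPGroup'.map H.subtype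
    have h1 : normIn P H := by
      refine ⟨map_subtype_le _, ?_⟩
      rintro b hb a ⟨q, hq, rfl⟩
      exact ⟨⟨b, hb⟩ * q * ⟨b, hb⟩⁻¹, hQn.conj_mem q hq ⟨b, hb⟩, rfl⟩
    have hfit := le_fitting_of_pchain p hPp h1 h2 h3
    exact hfit ⟨y, hQ (Subgroup.mem_zpowers y), rfl⟩
  exact mem_of_forall_primePow _ key ⟨x, hx⟩

theorem subgroupOf_map_normal {F F₂ : Type*} [Group F] [Group F₂] (f : F →* F₂)
    {A B : Subgroup F} (hAB : A ≤ B) (h : (A.subgroupOf B).Normal) :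
    ((A.map f).subgroupOf (B.map f)).Normal := by
  constructor
  intro n hn g
  rw [Subgroup.mem_subgroupOf] at hn ⊢
  obtain ⟨a, ha, hfa⟩ := hn
  obtain ⟨b, hb, hfb⟩ := g.2
  have key : b * a * b⁻¹ ∈ A := by
    have h2 := h.conj_mem ⟨a, hAB ha⟩ (Subgroup.mem_subgroupOf.mpr ha) ⟨b, hb⟩
    rw [Subgroup.mem_subgroupOf] at h2
    exact h2
  refine ⟨b * a * b⁻¹, key, ?_⟩
  push_cast
  simp only [map_mul, map_inv, hfa, hfb]

theorem isSubnormalSub_map {F F₂ : Type*} [Group F] [Group F₂] (f : F →* F₂)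
    (hf : Function.Surjective f) {H : Subgroup F} (h : IsSubnormalSub H) :
    IsSubnormalSub (H.map f) := by
  obtain ⟨n, s, h0, htop, hstep⟩ := h
  exact ⟨n, fun i => (s i).map f, by show (s 0).map f = _; rw [h0],
    by show (s n).map f = ⊤; rw [htop]; exact Subgroup.map_top_of_surjective f hf,
    fun i hi => ⟨Subgroup.map_mono (hstep i hi).1,
      subgroupOf_map_normal f (hstep i hi).1 (hstep i hi).2⟩⟩

theorem isSubnormalSub_subtype {G : Type*} [Group G] {K : Subgroup G} (hKn : K.Normal)
    {H : Subgroup ↥K} (h : IsSubnormalSub H) : IsSubnormalSub (H.map K.subtype) := by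
  obtain ⟨n, s, h0, htop, hstep⟩ := h
  refine ⟨n + 1, fun i => if i ≤ n then (s i).map K.subtype else ⊤, by simp [h0], by simp, ?_⟩
  intro i hi
  simp only []
  rcases lt_or_ge i n with hlt | hge
  · beta_reduce
    rw [if_pos (by omega : i ≤ n), if_pos (by omega : i + 1 ≤ n)]
    exact ⟨Subgroup.map_mono (hstep i hlt).1,
      subgroupOf_map_normal _ (hstep i hlt).1 (hstep i hlt).2⟩
  · have hieq : i = n := by omega
    subst hieq
    beta_reduce
    rw [if_pos (le_refl i), if_neg (by omega : ¬ i + 1 ≤ i)]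
    have htopmap : (s i).map K.subtype = K := by
      rw [htop, ← MonoidHom.range_eq_map, Subgroup.range_subtype]
    rw [htopmap]
    refine ⟨le_top, ?_⟩
    constructor
    intro m hm g
    rw [Subgroup.mem_subgroupOf] at hm ⊢
    exact hKn.conj_mem _ hm _

theorem center_map_le {X Y : Type*} [Group X] [Group Y] (f : X →* Y)
    (hf : Function.Surjective f) : (Subgroup.center X).map f ≤ Subgroup.center Y := by
  rintro _ ⟨z, hz, rfl⟩
  rw [Subgroup.mem_center_iff]
  intro y
  obtain ⟨x, rfl⟩ := hf y
  rw [← map_mul, ← map_mul, Subgroup.mem_center_iff.mp hz]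

open scoped commutatorElement in
theorem central_of_proper_normal {X : Type*} [Group X] (hq : IsQuasisimple X)
    {M : Subgroup X} (hM : M.Normal) (hMt : M ≠ ⊤) : M ≤ Subgroup.center X := by
  haveI := hM
  haveI := hq.2
  set π₀ := QuotientGroup.mk' (Subgroup.center X) with hπ₀
  have hsurj₀ : Function.Surjective π₀ := QuotientGroup.mk'_surjective _
  rcases (hM.map π₀ hsurj₀).eq_bot_or_eq_top with hbot | htop
  · rw [Subgroup.map_eq_bot_iff, QuotientGroup.ker_mk'] at hbot
    exact hbot
  · exfalso
    apply hMt
    -- M ⊔ center = ⊤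
    have hsup : M ⊔ Subgroup.center X = ⊤ := by
      have h1 := congrArg (Subgroup.comap π₀) htop
      rwa [Subgroup.comap_map_eq, QuotientGroup.ker_mk', Subgroup.comap_top] at h1
    -- quotient by M is abelian
    set π := QuotientGroup.mk' M with hπ
    have hsurj : Function.Surjective π := QuotientGroup.mk'_surjective _
    have hcent : Subgroup.center (X ⧸ M) = ⊤ := by
      have h1 : (Subgroup.center X).map π = ⊤ := by
        have h2 := congrArg (Subgroup.map π) hsup
        rw [Subgroup.map_sup, Subgroup.map_top_of_surjective _ hsurj] at h2
        have h3 : M.map π = ⊥ := (Subgroup.map_eq_bot_iff _).mpr (by rw [QuotientGroup.ker_mk'])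
        rwa [h3, bot_sup_eq] at h2
      exact le_antisymm le_top (h1 ▸ center_map_le π hsurj)
    -- hence commutator X ≤ M
    have hcomm : _root_.commutator X ≤ M := by
      rw [_root_.commutator_def, Subgroup.commutator_le]
      intro g₁ _ g₂ _
      have : ((⁅g₁, g₂⁆ : X) : X ⧸ M) = 1 := by
        have hc : Commute ((g₁ : X ⧸ M)) ((g₂ : X ⧸ M)) := by
          have := Subgroup.mem_center_iff.mp
            (hcent ▸ Subgroup.mem_top ((g₂ : X ⧸ M))) ((g₁ : X ⧸ M))
          exact this
        calc ((⁅g₁, g₂⁆ : X) : X ⧸ M) = ⁅(g₁ : X ⧸ M), (g₂ : X ⧸ M)⁆ := by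
              simp [commutatorElement_def]
        _ = 1 := commutatorElement_eq_one_iff_commute.mpr hc
      exact (QuotientGroup.eq_one_iff _).mp this
    rw [hq.1] at hcomm
    exact top_le_iff.mp hcomm

theorem quasisimple_quotient {X : Type*} [Group X] (hq : IsQuasisimple X) (M : Subgroup X)
    (hM : M.Normal) (hMt : M ≠ ⊤) : IsQuasisimple (X ⧸ M) := by
  haveI := hM
  set π := QuotientGroup.mk' M with hπdef
  have hsurj : Function.Surjective π := QuotientGroup.mk'_surjective _
  have hperf : _root_.commutator (X ⧸ M) = ⊤ := by
    calc _root_.commutator (X ⧸ M) = ⁅Subgroup.map π ⊤, Subgroup.map π ⊤⁆ := by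
          rw [_root_.commutator_def, Subgroup.map_top_of_surjective π hsurj]
    _ = Subgroup.map π ⁅⊤, ⊤⁆ := (Subgroup.map_commutator ⊤ ⊤ π).symm
    _ = Subgroup.map π (_root_.commutator X) := by rw [← _root_.commutator_def]
    _ = Subgroup.map π ⊤ := by rw [hq.1]
    _ = ⊤ := Subgroup.map_top_of_surjective π hsurj
  have hc : M ≤ Subgroup.center X := central_of_proper_normal hq hM hMt
  have hZ : Subgroup.center (X ⧸ M) = (Subgroup.center X).map π := by
    refine le_antisymm ?_ (center_map_le π hsurj)
    set P := Subgroup.comap π (Subgroup.center (X ⧸ M)) with hPdef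
    have hPn : P.Normal := (Subgroup.center (X ⧸ M)).normal_of_characteristic.comap π
    by_cases hPt : P = ⊤
    · exfalso
      have hcent : Subgroup.center (X ⧸ M) = ⊤ := by
        have h1 := congrArg (Subgroup.map π) hPt
        rwa [Subgroup.map_comap_eq_self_of_surjective hsurj,
          Subgroup.map_top_of_surjective π hsurj] at h1
      have hbot : _root_.commutator (X ⧸ M) ≤ ⊥ := by
        rw [_root_.commutator_def, Subgroup.commutator_le]
        intro g₁ _ g₂ _
        rw [Subgroup.mem_bot]
        exact commutatorElement_eq_one_iff_mul_comm.mpr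
          (Subgroup.mem_center_iff.mp (hcent ▸ Subgroup.mem_top g₂) g₁)
      rw [hperf] at hbot
      apply hMt
      ext x
      simp only [Subgroup.mem_top, iff_true]
      have h2 : (x : X ⧸ M) ∈ (⊥ : Subgroup (X ⧸ M)) := hbot (Subgroup.mem_top _)
      exact (QuotientGroup.eq_one_iff x).mp (Subgroup.mem_bot.mp h2)
    · have hPle : P ≤ Subgroup.center X := central_of_proper_normal hq hPn hPt
      have h3 : Subgroup.center (X ⧸ M) = P.map π :=
        (Subgroup.map_comap_eq_self_of_surjective hsurj _).symm
      rw [h3]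
      exact Subgroup.map_mono hPle
  refine ⟨hperf, ?_⟩
  have e0 := QuotientGroup.quotientMulEquivOfEq hZ
  have e := QuotientGroup.quotientQuotientEquivQuotient M (Subgroup.center X) hc
  have efull := (e0.trans e).symm
  haveI := hq.2
  haveI : Nontrivial ((X ⧸ M) ⧸ Subgroup.center (X ⧸ M)) := efull.symm.toEquiv.nontrivial
  exact IsSimpleGroup.isSimpleGroup_of_surjective efull.toMonoidHom efull.surjective

theorem quasisimple_of_mulEquiv {X Y : Type*} [Group X] [Group Y] (e : X ≃* Y)
    (hq : IsQuasisimple X) : IsQuasisimple Y := by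
  have hsurj : Function.Surjective e.toMonoidHom := e.surjective
  have hZ : (Subgroup.center X).map e.toMonoidHom = Subgroup.center Y := by
    refine le_antisymm (center_map_le _ hsurj) ?_
    intro y hy
    have h1 : e.symm y ∈ Subgroup.center X :=
      center_map_le e.symm.toMonoidHom e.symm.surjective ⟨y, hy, rfl⟩
    exact ⟨e.symm y, h1, e.apply_symm_apply y⟩
  have hperf : _root_.commutator Y = ⊤ := by
    calc _root_.commutator Y = ⁅Subgroup.map e.toMonoidHom ⊤, Subgroup.map e.toMonoidHom ⊤⁆ := by
          rw [_root_.commutator_def, Subgroup.map_top_of_surjective _ hsurj]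
    _ = Subgroup.map e.toMonoidHom ⁅⊤, ⊤⁆ := (Subgroup.map_commutator ⊤ ⊤ _).symm
    _ = Subgroup.map e.toMonoidHom (_root_.commutator X) := by rw [← _root_.commutator_def]
    _ = ⊤ := by rw [hq.1]; exact Subgroup.map_top_of_surjective _ hsurj
  refine ⟨hperf, ?_⟩
  · have eq := QuotientGroup.congr (Subgroup.center X) (Subgroup.center Y) e hZ
    haveI := hq.2
    haveI : Nontrivial (Y ⧸ Subgroup.center Y) := eq.symm.toEquiv.nontrivial
    exact IsSimpleGroup.isSimpleGroup_of_surjective eq.toMonoidHom eq.surjective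

/-- If `K` is a closed normal subgroup of a profinite group `G` with `K = F*(K)`,
then the image of `K` in any finite quotient `G/N` lies in `F*(G/N)`. -/
theorem fstar_subgroup_image_le_fstar (G : Type*) [Group G] [TopologicalSpace G] [IsTopologicalGroup G] [CompactSpace G] [T2Space G] [TotallyDisconnectedSpace G]
    (K : Subgroup G) (hKn : K.Normal) (hKc : IsClosed (K : Set G))
    (hK : genFitting K = ⊤)
    (N : Subgroup G) [N.Normal] (hNo : IsOpen (N : Set G)) :
    K.map (QuotientGroup.mk' N) ≤ fstarSub (G ⧸ N) := by
  haveI : DiscreteTopology (G ⧸ N) := by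
    apply discreteTopology_of_isOpen_singleton_one
    have himg : IsOpen ((QuotientGroup.mk '' (N : Set G)) : Set (G ⧸ N)) :=
      QuotientGroup.isOpenMap_coe _ hNo
    have heq : ((QuotientGroup.mk '' (N : Set G)) : Set (G ⧸ N)) = {1} := by
      ext x
      constructor
      · rintro ⟨n, hn, rfl⟩
        exact (QuotientGroup.eq_one_iff n).mpr hn
      · rintro rfl
        exact ⟨1, N.one_mem, rfl⟩
    rwa [heq] at himg
  haveI : Finite (G ⧸ N) := finite_of_compact_of_discrete
  have hπsurj : Function.Surjective (QuotientGroup.mk' N) := QuotientGroup.mk'_surjective N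
  set φ : ↥K →* G ⧸ N := (QuotientGroup.mk' N).comp K.subtype with hφdef
  have hφcont : Continuous φ := by
    have h1 : Continuous (QuotientGroup.mk : G → G ⧸ N) := QuotientGroup.continuous_mk
    exact h1.comp continuous_subtype_val
  have hKmap : K.map (QuotientGroup.mk' N) = Subgroup.map φ ⊤ := by
    rw [← MonoidHom.range_eq_map, MonoidHom.range_comp, Subgroup.range_subtype]
  rw [hKmap]
  rw [genFitting] at hK
  have hclos : Subgroup.map φ ⊤ ≤ Subgroup.map φ
      (⨆ H ∈ {H : Subgroup ↥K | (H.Normal ∧ IsClosed (H : Set ↥K) ∧ IsPronilpotent H) ∨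
        IsComponentPro H}, H) := by
    set S : Subgroup ↥K := ⨆ H ∈ {H : Subgroup ↥K |
      (H.Normal ∧ IsClosed (H : Set ↥K) ∧ IsPronilpotent H) ∨ IsComponentPro H}, H with hSdef
    rintro x ⟨y, -, rfl⟩
    have hy : y ∈ S.topologicalClosure := by rw [hK]; trivial
    have hy2 : (y : ↥K) ∈ _root_.closure (S : Set ↥K) := hy
    have h3 : φ y ∈ _root_.closure (φ '' (S : Set ↥K)) :=
      image_closure_subset_closure_image hφcont ⟨y, hy2, rfl⟩
    have h4 : IsClosed (φ '' (S : Set ↥K)) := isClosed_discrete _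
    have h5 : φ y ∈ φ '' (S : Set ↥K) := by rwa [h4.closure_eq] at h3
    obtain ⟨z, hz, hzeq⟩ := h5
    exact hzeq ▸ Subgroup.mem_map_of_mem φ hz
  refine hclos.trans ?_
  rw [Subgroup.map_iSup]
  refine iSup_le fun H => ?_
  rw [Subgroup.map_iSup]
  refine iSup_le fun hH => ?_
  rcases hH with ⟨hHn, hHc, hHpro⟩ | ⟨hsub, hclosed, hfin, hqs⟩
  · -- pronilpotent case
    set ψ : ↥H →* G ⧸ N := φ.comp H.subtype with hψdef
    have hrange : ψ.range = Subgroup.map φ H := by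
      rw [MonoidHom.range_comp, Subgroup.range_subtype]
    have hker_open : IsOpen ((ψ.ker : Set ↥H)) := by
      have heq : (ψ.ker : Set ↥H) = (fun h : ↥H => ((h : ↥K) : G)) ⁻¹' (N : Set G) := by
        ext h
        simp only [SetLike.mem_coe, MonoidHom.mem_ker, Set.mem_preimage]
        rw [hψdef]
        show (QuotientGroup.mk' N) ((h : ↥K) : G) = 1 ↔ _
        rw [QuotientGroup.mk'_apply, QuotientGroup.eq_one_iff]
      rw [heq]
      exact hNo.preimage (continuous_subtype_val.comp continuous_subtype_val)
    have hnil : Group.IsNilpotent (↥H ⧸ ψ.ker) := hHpro ψ.ker inferInstance hker_open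
    have hnil2 : Group.IsNilpotent ↥(Subgroup.map φ H) := by
      haveI := hnil
      have := nilpotent_of_mulEquiv (QuotientGroup.quotientKerEquivRange ψ)
      rwa [hrange] at this
    have h2 : normIn (Subgroup.map φ H) (Subgroup.map φ ⊤) := by
      refine ⟨Subgroup.map_mono le_top, ?_⟩
      rintro b ⟨k, -, rfl⟩ a ⟨h, hh, rfl⟩
      exact ⟨k * h * k⁻¹, hHn.conj_mem h hh k, by simp [map_mul]⟩
    have h3 : normIn (Subgroup.map φ ⊤) ⊤ := by
      refine ⟨le_top, ?_⟩
      rintro b - a ⟨k, -, rfl⟩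
      obtain ⟨g, rfl⟩ := hπsurj b
      have hg : (QuotientGroup.mk' N) g * φ k * ((QuotientGroup.mk' N) g)⁻¹ =
          (QuotientGroup.mk' N) (g * (k : G) * g⁻¹) := by
        simp only [map_mul, map_inv]
        rfl
      have hmem : (⟨g * (k : G) * g⁻¹, hKn.conj_mem _ k.2 g⟩ : ↥K) ∈ (⊤ : Subgroup ↥K) :=
        Subgroup.mem_top _
      refine ⟨⟨g * (k : G) * g⁻¹, hKn.conj_mem _ k.2 g⟩, hmem, ?_⟩
      rw [hg]
      rfl
    have hfit := nilpotent_normIn_le_fitting hnil2 h2 h3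
    refine hfit.trans ?_
    show fittingSub (G ⧸ N) ≤ fittingSub (G ⧸ N) ⊔ layerSub (G ⧸ N)
    exact le_sup_left
  · -- component case
    by_cases hbot : Subgroup.map φ H = ⊥
    · rw [hbot]; exact bot_le
    · set ψ : ↥H →* G ⧸ N := φ.comp H.subtype with hψdef
      have hrange : ψ.range = Subgroup.map φ H := by
        rw [MonoidHom.range_comp, Subgroup.range_subtype]
      have hcomp : IsComponentFin (Subgroup.map φ H) := by
        constructor
        · have hmm : Subgroup.map φ H = (H.map K.subtype).map (QuotientGroup.mk' N) := by
            rw [Subgroup.map_map]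
          rw [hmm]
          exact isSubnormalSub_map _ hπsurj (isSubnormalSub_subtype hKn hsub)
        · have hMt : ψ.ker ≠ ⊤ := by
            intro hcon
            apply hbot
            rw [← hrange, MonoidHom.range_eq_map, ← hcon]
            exact (Subgroup.map_eq_bot_iff _).mpr le_rfl
          have hq2 : IsQuasisimple (↥H ⧸ ψ.ker) :=
            quasisimple_quotient hqs ψ.ker inferInstance hMt
          have hq3 := quasisimple_of_mulEquiv (QuotientGroup.quotientKerEquivRange ψ) hq2
          rwa [hrange] at hq3
      have hlay : Subgroup.map φ H ≤ layerSub (G ⧸ N) := by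
        show Subgroup.map φ H ≤ ⨆ Q ∈ {Q : Subgroup (G ⧸ N) | IsComponentFin Q}, Q
        exact le_biSup id hcomp
      refine hlay.trans ?_
      show layerSub (G ⧸ N) ≤ fittingSub (G ⧸ N) ⊔ layerSub (G ⧸ N)
      exact le_sup_right
end

section
/- The class of Fitting-regular profinite groups is closed under extensions: if N is a closed normal subgroup of a profinite group G with N and G/N both Fitting-regular, then G is Fitting-regular. -/
open Subgroup
open scoped commutatorElement

namespace FRExt

variable {G : Type*} [Group G]

/-- Relative lower central series of a subgroup. -/
def relLCS (A : Subgroup G) : ℕ → Subgroup G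
  | 0 => ⊤
  | n + 1 => ⁅relLCS A n, A⁆

lemma relLCS_normal (A : Subgroup G) (hA : A.Normal) : ∀ n, (relLCS A n).Normal
  | 0 => inferInstanceAs (⊤ : Subgroup G).Normal
  | n + 1 => by
    haveI := relLCS_normal A hA n
    haveI := hA
    exact Subgroup.commutator_normal _ _

lemma relLCS_succ_le (A : Subgroup G) (hA : A.Normal) (n : ℕ) :
    relLCS A (n + 1) ≤ relLCS A n := by
  haveI := relLCS_normal A hA n
  exact Subgroup.commutator_le_left _ _

lemma relLCS_antitone (A : Subgroup G) (hA : A.Normal) : Antitone (relLCS A) :=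
  antitone_nat_of_succ_le (relLCS_succ_le A hA)

lemma relLCS_le_map (A : Subgroup G) (hA : A.Normal) (n : ℕ) :
    relLCS A (n + 1) ≤ ((⊤ : Subgroup A).lowerCentralSeries n).map A.subtype := by
  induction n with
  | zero =>
      show ⁅(⊤ : Subgroup G), A⁆ ≤ _
      have : ((⊤ : Subgroup A).lowerCentralSeries 0).map A.subtype = A := by
        simp [Subgroup.lowerCentralSeries, ← MonoidHom.range_eq_map, A.range_subtype]
      rw [this]
      haveI := hA
      exact Subgroup.commutator_le_right _ _
  | succ n ih =>
      show ⁅relLCS A (n + 1), A⁆ ≤ _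
      calc ⁅relLCS A (n + 1), A⁆
          ≤ ⁅((⊤ : Subgroup A).lowerCentralSeries n).map A.subtype, (⊤ : Subgroup A).map A.subtype⁆ := by
            refine Subgroup.commutator_mono ih ?_
            simp [← MonoidHom.range_eq_map, A.range_subtype]
        _ = ((⊤ : Subgroup A).lowerCentralSeries (n + 1)).map A.subtype :=
            (Subgroup.map_commutator _ _ _).symm

lemma normal_iSup {ι : Sort*} (f : ι → Subgroup G) (h : ∀ i, (f i).Normal) :
    (⨆ i, f i).Normal := by
  constructor
  intro x hx g
  refine Subgroup.iSup_induction f (C := fun x => g * x * g⁻¹ ∈ ⨆ i, f i) hx ?_ ?_ ?_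
  · intro i x hx
    exact le_iSup f i ((h i).conj_mem x hx g)
  · simpa using (⨆ i, f i).one_mem
  · intro a b ha hb
    have : g * (a * b) * g⁻¹ = g * a * g⁻¹ * (g * b * g⁻¹) := by group
    rw [this]; exact mul_mem ha hb

lemma comm_iSup_le {ι : Sort*} (f : ι → Subgroup G) (C N : Subgroup G) (hN : N.Normal)
    (h : ∀ i, ⁅f i, C⁆ ≤ N) : ⁅⨆ i, f i, C⁆ ≤ N := by
  rw [Subgroup.commutator_le]
  intro g hg c hc
  refine Subgroup.iSup_induction f (C := fun g => ∀ c ∈ C, ⁅g, c⁆ ∈ N) hg ?_ ?_ ?_ c hc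
  · intro i x hx c hc
    exact Subgroup.commutator_le.mp (h i) x hx c hc
  · intro c hc
    simpa using N.one_mem
  · intro a b ha hb c hc
    have : ⁅a * b, c⁆ = a * ⁅b, c⁆ * a⁻¹ * ⁅a, c⁆ := by
      simp only [commutatorElement_def]; group
    rw [this]
    exact N.mul_mem (hN.conj_mem _ (hb c hc) a) (ha c hc)


/-- The key estimate for Fitting's theorem. -/
lemma lcs_le_iSup (A B : Subgroup G) (hA : A.Normal) (hB : B.Normal) (hAB : A ⊔ B = ⊤) (n : ℕ) :
    (⊤ : Subgroup G).lowerCentralSeries n ≤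
      ⨆ (p : ℕ × ℕ) (_ : p.1 + p.2 = n), (relLCS A p.1 ⊓ relLCS B p.2) := by
  induction n with
  | zero =>
      refine le_trans ?_ (le_iSup₂ (f := fun (p : ℕ × ℕ) (_ : p.1 + p.2 = 0) =>
        relLCS A p.1 ⊓ relLCS B p.2) ((0,0) : ℕ × ℕ) rfl)
      simp [relLCS]
  | succ n ih =>
      have hTnorm : ∀ m : ℕ, (⨆ (p : ℕ × ℕ) (_ : p.1 + p.2 = m),
          (relLCS A p.1 ⊓ relLCS B p.2)).Normal := by
        intro m
        refine normal_iSup _ fun p => normal_iSup _ fun _ => ?_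
        exact ⟨fun x hx g => ⟨(relLCS_normal A hA p.1).conj_mem x hx.1 g,
          (relLCS_normal B hB p.2).conj_mem x hx.2 g⟩⟩
      set T : ℕ → Subgroup G := fun m => ⨆ (p : ℕ × ℕ) (_ : p.1 + p.2 = m),
          (relLCS A p.1 ⊓ relLCS B p.2) with hT
      -- per-pair estimates
      have key : ∀ (C : Subgroup G) (hC : C ≤ A ⊔ B)
          (step : ∀ p : ℕ × ℕ, p.1 + p.2 = n → ⁅relLCS A p.1 ⊓ relLCS B p.2, C⁆ ≤ T (n+1)),
          ⁅T n, C⁆ ≤ T (n + 1) := by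
        intro C hC step
        refine comm_iSup_le _ _ _ (hTnorm (n+1)) fun p => ?_
        exact comm_iSup_le _ _ _ (hTnorm (n+1)) fun hp => step p hp
      have stepA : ∀ p : ℕ × ℕ, p.1 + p.2 = n →
          ⁅relLCS A p.1 ⊓ relLCS B p.2, A⁆ ≤ T (n + 1) := by
        intro p hp
        have h1 : ⁅relLCS A p.1 ⊓ relLCS B p.2, A⁆ ≤ relLCS A (p.1 + 1) ⊓ relLCS B p.2 := by
          rw [Subgroup.commutator_le]
          intro x hx a ha
          constructor
          · exact Subgroup.commutator_mem_commutator hx.1 ha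
          · have hxB := hx.2
            have : ⁅x, a⁆ = x * (a * x⁻¹ * a⁻¹) := by
              simp only [commutatorElement_def]; group
            rw [this]
            exact mul_mem hxB ((relLCS_normal B hB p.2).conj_mem _ (inv_mem hxB) a)
        refine h1.trans ?_
        exact le_iSup₂ (f := fun (q : ℕ × ℕ) (_ : q.1 + q.2 = n + 1) =>
          relLCS A q.1 ⊓ relLCS B q.2) ((p.1 + 1, p.2) : ℕ × ℕ) (by omega)
      have stepB : ∀ p : ℕ × ℕ, p.1 + p.2 = n →
          ⁅relLCS A p.1 ⊓ relLCS B p.2, B⁆ ≤ T (n + 1) := by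
        intro p hp
        have h1 : ⁅relLCS A p.1 ⊓ relLCS B p.2, B⁆ ≤ relLCS A p.1 ⊓ relLCS B (p.2 + 1) := by
          rw [Subgroup.commutator_le]
          intro x hx b hb
          constructor
          · have hxA := hx.1
            have : ⁅x, b⁆ = x * (b * x⁻¹ * b⁻¹) := by
              simp only [commutatorElement_def]; group
            rw [this]
            exact mul_mem hxA ((relLCS_normal A hA p.1).conj_mem _ (inv_mem hxA) b)
          · exact Subgroup.commutator_mem_commutator hx.2 hb
        refine h1.trans ?_
        exact le_iSup₂ (f := fun (q : ℕ × ℕ) (_ : q.1 + q.2 = n + 1) =>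
          relLCS A q.1 ⊓ relLCS B q.2) ((p.1, p.2 + 1) : ℕ × ℕ) (by omega)
      calc (⊤ : Subgroup G).lowerCentralSeries (n + 1) = ⁅(⊤ : Subgroup G).lowerCentralSeries n, ⊤⁆ := rfl
        _ ≤ ⁅T n, ⊤⁆ := Subgroup.commutator_mono ih le_rfl
        _ = ⁅(⊤ : Subgroup G), T n⁆ := Subgroup.commutator_comm _ _
        _ = ⁅A ⊔ B, T n⁆ := by rw [hAB]
        _ ≤ T (n + 1) := by
            have hsup : A ⊔ B = ⨆ b : Bool, cond b A B := by
              rw [iSup_bool_eq]; rfl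
            rw [hsup]
            refine comm_iSup_le _ _ _ (hTnorm (n+1)) fun i => ?_
            cases i
            · rw [Subgroup.commutator_comm]
              exact key B le_sup_right stepB
            · rw [Subgroup.commutator_comm]
              exact key A le_sup_left stepA

/-- Fitting's theorem, whole-group version. -/
lemma fitting_group (A B : Subgroup G) (hA : A.Normal) (hB : B.Normal)
    (nA : Group.IsNilpotent A) (nB : Group.IsNilpotent B) (hAB : A ⊔ B = ⊤) :
    Group.IsNilpotent G := by
  obtain ⟨a, ha⟩ := _root_.nilpotent_iff_lowerCentralSeries.mp nA
  obtain ⟨b, hb⟩ := _root_.nilpotent_iff_lowerCentralSeries.mp nB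
  rw [_root_.nilpotent_iff_lowerCentralSeries]
  refine ⟨a + b + 1, le_bot_iff.mp ?_⟩
  refine (lcs_le_iSup A B hA hB hAB (a + b + 1)).trans ?_
  refine iSup₂_le fun p hp => ?_
  rcases le_or_gt (a + 1) p.1 with h | h
  · have : relLCS A p.1 ≤ ⊥ := by
      refine le_trans (relLCS_antitone A hA h) ?_
      refine (relLCS_le_map A hA a).trans ?_
      rw [ha]; simp
    exact le_trans inf_le_left this
  · have hb2 : b + 1 ≤ p.2 := by omega
    have : relLCS B p.2 ≤ ⊥ := by
      refine le_trans (relLCS_antitone B hB hb2) ?_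
      refine (relLCS_le_map B hB b).trans ?_
      rw [hb]; simp
    exact le_trans inf_le_right this

/-- Fitting's theorem for the join of two subgroups, with normality only relative
to the join. -/
lemma fitting_sup2 (A B : Subgroup G)
    (hA : ∀ x ∈ A ⊔ B, ∀ a ∈ A, x * a * x⁻¹ ∈ A)
    (hB : ∀ x ∈ A ⊔ B, ∀ b ∈ B, x * b * x⁻¹ ∈ B)
    (nA : Group.IsNilpotent A) (nB : Group.IsNilpotent B) :
    Group.IsNilpotent ↥(A ⊔ B) := by
  have hAK : A ≤ A ⊔ B := le_sup_left
  have hBK : B ≤ A ⊔ B := le_sup_right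
  have hA' : (A.subgroupOf (A ⊔ B)).Normal := by
    rw [Subgroup.normal_subgroupOf_iff hAK]
    intro h k hh hk
    exact hA k hk h hh
  have hB' : (B.subgroupOf (A ⊔ B)).Normal := by
    rw [Subgroup.normal_subgroupOf_iff hBK]
    intro h k hh hk
    exact hB k hk h hh
  have nA' : Group.IsNilpotent (A.subgroupOf (A ⊔ B)) := by
    haveI := nA
    exact nilpotent_of_mulEquiv (Subgroup.subgroupOfEquivOfLe hAK).symm
  have nB' : Group.IsNilpotent (B.subgroupOf (A ⊔ B)) := by
    haveI := nB
    exact nilpotent_of_mulEquiv (Subgroup.subgroupOfEquivOfLe hBK).symm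
  refine fitting_group _ _ hA' hB' nA' nB' ?_
  rw [← Subgroup.subgroupOf_sup hAK hBK, Subgroup.subgroupOf_self]

/-- Join of a finite family of nilpotent subgroups all normalized by a common
subgroup `C` containing them. -/
lemma fitting_iSup {ι : Type*} [Finite ι] (f : ι → Subgroup G) (C : Subgroup G)
    (hle : ∀ i, f i ≤ C)
    (hnorm : ∀ i, ∀ c ∈ C, ∀ x ∈ f i, c * x * c⁻¹ ∈ f i)
    (hnil : ∀ i, Group.IsNilpotent (f i)) :
    Group.IsNilpotent ↥(⨆ i, f i) := by
  classical
  have := Fintype.ofFinite ι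
  have main : ∀ s : Finset ι, Group.IsNilpotent ↥(s.sup f) := by
    intro s
    induction s using Finset.induction_on with
    | empty => simpa using inferInstanceAs (Group.IsNilpotent ↥(⊥ : Subgroup G))
    | @insert a s ha ih =>
        rw [Finset.sup_insert]
        have hsle : s.sup f ≤ C := by
          refine Finset.sup_le fun i _ => hle i
        have hsnorm : ∀ c ∈ C, ∀ x ∈ s.sup f, c * x * c⁻¹ ∈ s.sup f := by
          intro c hc x hx
          rw [Finset.sup_eq_iSup] at hx ⊢
          rw [iSup_subtype'] at hx ⊢
          refine Subgroup.iSup_induction (C := fun x => c * x * c⁻¹ ∈ ⨆ (i : {i // i ∈ s}), f i)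
            _ hx ?_ ?_ ?_
          · intro i x hxi
            exact le_iSup (fun (i : {i // i ∈ s}) => f i) i (hnorm i c hc x hxi)
          · simpa using Subgroup.one_mem _
          · intro x y hx hy
            have : c * (x * y) * c⁻¹ = c * x * c⁻¹ * (c * y * c⁻¹) := by group
            rw [this]; exact mul_mem hx hy
        refine fitting_sup2 _ _ ?_ ?_ (hnil a) ih
        · intro x hx y hy
          have hxC : x ∈ C := by
            have : f a ⊔ s.sup f ≤ C := sup_le (hle a) hsle
            exact this hx
          exact hnorm a x hxC y hy
        · intro x hx y hy
          have hxC : x ∈ C := by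
            have : f a ⊔ s.sup f ≤ C := sup_le (hle a) hsle
            exact this hx
          exact hsnorm x hxC y hy
  have : (⨆ i, f i) = Finset.univ.sup f := by
    rw [Finset.sup_univ_eq_iSup]
  rw [this]
  exact main Finset.univ


section Transport

variable {X Y : Type*} [Group X] [Group Y]

lemma isPronilpotent_of_equiv [TopologicalSpace X] [TopologicalSpace Y]
    (e : X ≃* Y) (he : Continuous e) (h : IsPronilpotent X) : IsPronilpotent Y := by
  intro U hUn hUo
  haveI := hUn
  have hcn : (U.comap e.toMonoidHom).Normal := hUn.comap _
  haveI := hcn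
  have hco : IsOpen ((U.comap e.toMonoidHom : Subgroup X) : Set X) := hUo.preimage he
  haveI := h _ hcn hco
  have hsurj : Function.Surjective (QuotientGroup.map (U.comap e.toMonoidHom) U e.toMonoidHom le_rfl) := by
    intro q
    obtain ⟨y, rfl⟩ := QuotientGroup.mk_surjective q
    exact ⟨QuotientGroup.mk (e.symm y), by rw [QuotientGroup.map_mk]; simp⟩
  exact nilpotent_of_surjective _ hsurj

/-- The quotient of a subgroup by the trace of an open normal subgroup is isomorphic to its
image in the quotient. -/
noncomputable def quotSubgroupOfEquivMap {H : Type*} [Group H] (V : Subgroup H) [V.Normal]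
    (X : Subgroup H) : (↥X ⧸ V.subgroupOf X) ≃* ↥(X.map (QuotientGroup.mk' V)) := by
  have hker : ((QuotientGroup.mk' V).comp X.subtype).ker = V.subgroupOf X := by
    ext x
    simp [MonoidHom.mem_ker, Subgroup.mem_subgroupOf, QuotientGroup.eq_one_iff]
  have hrange : ((QuotientGroup.mk' V).comp X.subtype).range = X.map (QuotientGroup.mk' V) := by
    rw [MonoidHom.range_comp, Subgroup.range_subtype]
  exact (QuotientGroup.quotientMulEquivOfEq hker.symm).trans
    ((QuotientGroup.quotientKerEquivRange _).trans (MulEquiv.subgroupCongr hrange))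

lemma subgroupOf_map_normal (f : X →* Y) (hf : Function.Injective f) (A B : Subgroup X)
    (h : (A.subgroupOf B).Normal) : ((A.map f).subgroupOf (B.map f)).Normal := by
  constructor
  rintro ⟨y, hy⟩ hmem ⟨g, hg⟩
  obtain ⟨b, hb, rfl⟩ := hy
  obtain ⟨b', hb', rfl⟩ := hg
  rw [Subgroup.mem_subgroupOf] at hmem
  have hbA : b ∈ A := (Subgroup.mem_map_iff_mem hf).mp hmem
  have hconj : b' * b * b'⁻¹ ∈ A := by
    have := h.conj_mem ⟨b, hb⟩ (Subgroup.mem_subgroupOf.mpr hbA) ⟨b', hb'⟩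
    rw [Subgroup.mem_subgroupOf] at this
    exact this
  rw [Subgroup.mem_subgroupOf]
  show f b' * f b * (f b')⁻¹ ∈ A.map f
  rw [← map_inv, ← map_mul, ← map_mul]
  exact Subgroup.mem_map_of_mem f hconj

lemma isSimpleGroup_of_equiv (e : X ≃* Y) (h : IsSimpleGroup X) : IsSimpleGroup Y := by
  haveI := h
  haveI : Nontrivial Y := e.symm.toEquiv.nontrivial
  exact IsSimpleGroup.isSimpleGroup_of_surjective e.toMonoidHom e.surjective

lemma center_map_equiv (e : X ≃* Y) : (Subgroup.center X).map e.toMonoidHom = Subgroup.center Y := by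
  ext y
  simp only [Subgroup.mem_map]
  constructor
  · rintro ⟨x, hx, rfl⟩
    rw [Subgroup.mem_center_iff] at hx ⊢
    intro g
    have := hx (e.symm g)
    calc g * e x = e (e.symm g * x) := by simp
      _ = e (x * e.symm g) := by rw [this]
      _ = e x * g := by simp
  · intro hy
    refine ⟨e.symm y, ?_, by simp⟩
    rw [Subgroup.mem_center_iff] at hy ⊢
    intro g
    have := hy (e g)
    apply e.injective
    simpa using this

lemma isQuasisimple_of_equiv (e : X ≃* Y) (h : IsQuasisimple X) : IsQuasisimple Y := by
  obtain ⟨hperf, hsimple⟩ := h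
  constructor
  · have : commutator Y = (commutator X).map e.toMonoidHom := by
      unfold _root_.commutator
      rw [Subgroup.map_commutator]
      congr 1 <;> exact (Subgroup.map_top_of_surjective _ e.surjective).symm
    rw [this, hperf, Subgroup.map_top_of_surjective _ e.surjective]
  · have hcmap : (Subgroup.center X).map e.toMonoidHom = Subgroup.center Y := center_map_equiv e
    haveI := hsimple
    exact isSimpleGroup_of_equiv (QuotientGroup.congr _ _ e hcmap) hsimple

end Transport



section SubnormalTransport

variable {X Y : Type*} [Group X] [Group Y]

lemma subgroupOf_top_normal {M : Subgroup X} (hM : M.Normal) : (M.subgroupOf ⊤).Normal := by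
  constructor
  intro x hx g
  rw [Subgroup.mem_subgroupOf] at hx ⊢
  exact hM.conj_mem _ hx _

lemma isSubnormal_map_equiv (e : X ≃* Y) (P : Subgroup X) (h : IsSubnormalSub P) :
    IsSubnormalSub (P.map e.toMonoidHom) := by
  obtain ⟨n, s, h0, hn, hstep⟩ := h
  refine ⟨n, fun i => (s i).map e.toMonoidHom, by simp only [h0], ?_, ?_⟩
  · simp only [hn]
    exact Subgroup.map_top_of_surjective _ e.surjective
  · intro i hi
    exact ⟨Subgroup.map_mono (hstep i hi).1,
      subgroupOf_map_normal _ e.injective _ _ (hstep i hi).2⟩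

lemma isSubnormal_map_subtype {M : Subgroup X} (hM : M.Normal) (P : Subgroup ↥M)
    (h : IsSubnormalSub P) : IsSubnormalSub (P.map M.subtype) := by
  classical
  obtain ⟨n, s, h0, hn, hstep⟩ := h
  have hmaptop : (⊤ : Subgroup ↥M).map M.subtype = M := by
    rw [← MonoidHom.range_eq_map, Subgroup.range_subtype]
  let t : ℕ → Subgroup X := fun i => if i ≤ n then (s i).map M.subtype else ⊤
  have ht1 : ∀ i, i ≤ n → t i = (s i).map M.subtype := fun i h => if_pos h
  have ht2 : ∀ i, ¬ i ≤ n → t i = ⊤ := fun i h => if_neg h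
  refine ⟨n + 1, t, ?_, ?_, ?_⟩
  · rw [ht1 0 (Nat.zero_le n), h0]
  · exact ht2 (n + 1) (by omega)
  · intro i hi
    rcases Nat.lt_or_ge i n with hlt | hge
    · rw [ht1 i (le_of_lt hlt), ht1 (i + 1) hlt]
      exact ⟨Subgroup.map_mono (hstep i hlt).1,
        subgroupOf_map_normal _ M.subtype_injective _ _ (hstep i hlt).2⟩
    · have hieq : i = n := by omega
      subst hieq
      rw [ht1 i le_rfl, ht2 (i + 1) (by omega), hn, hmaptop]
      exact ⟨le_top, subgroupOf_top_normal hM⟩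

end SubnormalTransport

section TopTransport

variable {X Y : Type*} [Group X] [TopologicalSpace X] [Group Y] [TopologicalSpace Y]

/-- Continuity of the canonical equivalence onto the image of a subgroup under an
injective continuous homomorphism. -/
lemma continuous_equivMapOfInjective (f : X →* Y) (hf : Function.Injective f)
    (hc : Continuous f) (P : Subgroup X) :
    Continuous ⇑(Subgroup.equivMapOfInjective P f hf) := by
  rw [continuous_induced_rng]
  have : (Subtype.val ∘ ⇑(Subgroup.equivMapOfInjective P f hf)) = fun x : ↥P => f x.val := by
    funext x
    exact Subgroup.coe_equivMapOfInjective_apply P f hf x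
  rw [this]
  exact hc.comp continuous_subtype_val

lemma isComponentPro_map_equiv [IsTopologicalGroup X] [IsTopologicalGroup Y]
    (e : X ≃* Y) (he : Continuous e) (he' : Continuous e.symm) (P : Subgroup X)
    (h : IsComponentPro P) : IsComponentPro (P.map e.toMonoidHom) := by
  obtain ⟨hsub, hcl, hfin, hqs⟩ := h
  have hclosedmap : IsClosedMap ⇑e := by
    intro s hs
    have : ⇑e '' s = ⇑e.symm ⁻¹' s := by
      ext y
      simp [Set.mem_image, MulEquiv.symm_apply_eq]
      constructor
      · rintro ⟨x, hx, rfl⟩; simpa using hx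
      · intro hy; exact ⟨e.symm y, hy, by simp⟩
    rw [this]
    exact hs.preimage he'
  refine ⟨isSubnormal_map_equiv e P hsub, ?_, ?_, ?_⟩
  · rw [Subgroup.coe_map]
    exact hclosedmap _ hcl
  · exact Finite.of_equiv _ (Subgroup.equivMapOfInjective P e.toMonoidHom e.injective).toEquiv
  · exact isQuasisimple_of_equiv (Subgroup.equivMapOfInjective P e.toMonoidHom e.injective) hqs

lemma isComponentPro_map_subtype {H : Type*} [Group H] [TopologicalSpace H] [IsTopologicalGroup H]
    {M : Subgroup H} (hM : M.Normal) (hMc : IsClosed (M : Set H)) (P : Subgroup ↥M)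
    (h : IsComponentPro P) : IsComponentPro (P.map M.subtype) := by
  obtain ⟨hsub, hcl, hfin, hqs⟩ := h
  refine ⟨isSubnormal_map_subtype hM P hsub, ?_, ?_, ?_⟩
  · rw [Subgroup.coe_map]
    exact hMc.isClosedEmbedding_subtypeVal.isClosedMap _ hcl
  · exact Finite.of_equiv _ (Subgroup.equivMapOfInjective P M.subtype M.subtype_injective).toEquiv
  · exact isQuasisimple_of_equiv (Subgroup.equivMapOfInjective P M.subtype M.subtype_injective) hqs

variable [IsTopologicalGroup X] [IsTopologicalGroup Y]

lemma fittingDegenerate_of_equiv (e : X ≃* Y) (he : Continuous e) (he' : Continuous e.symm)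
    (h : FittingDegenerate Y) : FittingDegenerate X := by
  have hclosedmap : IsClosedMap ⇑e := by
    intro s hs
    have : ⇑e '' s = ⇑e.symm ⁻¹' s := by
      ext y
      constructor
      · rintro ⟨x, hx, rfl⟩; simpa using hx
      · intro hy; exact ⟨e.symm y, hy, by simp⟩
    rw [this]
    exact hs.preimage he'
  unfold FittingDegenerate at h ⊢
  rw [eq_bot_iff]
  have hle : genFitting X ≤ (genFitting Y).comap e.toMonoidHom := by
    unfold genFitting
    refine Subgroup.topologicalClosure_minimal _ ?_
      ((Subgroup.isClosed_topologicalClosure _).preimage he)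
    refine iSup₂_le fun P hP => ?_
    have hmem : P.map e.toMonoidHom ∈ {H : Subgroup Y |
        (H.Normal ∧ IsClosed (H : Set Y) ∧ IsPronilpotent H) ∨ IsComponentPro H} := by
      rcases hP with ⟨hn, hc, hpro⟩ | hcomp
      · left
        refine ⟨hn.map _ e.surjective, ?_, ?_⟩
        · rw [Subgroup.coe_map]; exact hclosedmap _ hc
        · exact isPronilpotent_of_equiv (Subgroup.equivMapOfInjective P e.toMonoidHom e.injective)
            (continuous_equivMapOfInjective e.toMonoidHom e.injective he P) hpro
      · right
        exact isComponentPro_map_equiv e he he' P hcomp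
    intro x hx
    rw [Subgroup.mem_comap]
    exact Subgroup.le_topologicalClosure _
      (le_iSup₂ (f := fun (H : Subgroup Y) (_ : H ∈ _) => H) (P.map e.toMonoidHom) hmem
        (Subgroup.mem_map_of_mem _ hx))
  refine hle.trans ?_
  rw [h]
  intro x hx
  rw [Subgroup.mem_comap, Subgroup.mem_bot] at hx
  rw [Subgroup.mem_bot]
  exact e.injective (by simpa using hx)

end TopTransport


section ONB

/-- Open normal subgroups form a neighbourhood basis of the identity. -/
def HasONB (H : Type*) [Group H] [TopologicalSpace H] : Prop :=
  ∀ O : Set H, IsOpen O → (1 : H) ∈ O →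
    ∃ V : Subgroup H, V.Normal ∧ IsOpen (V : Set H) ∧ (V : Set H) ⊆ O

lemma hasONB_of_profinite (H : Type*) [Group H] [TopologicalSpace H] [IsTopologicalGroup H]
    [CompactSpace H] [T2Space H] [TotallyDisconnectedSpace H] : HasONB H := by
  intro O hO h1
  obtain ⟨C, hC, h1C, hCO⟩ := compact_exists_isClopen_in_isOpen hO h1
  obtain ⟨V, hV⟩ := IsTopologicalGroup.exist_openNormalSubgroup_sub_clopen_nhds_of_one hC h1C
  exact ⟨V.toOpenSubgroup.toSubgroup, V.isNormal', V.toOpenSubgroup.isOpen', hV.trans hCO⟩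

lemma hasONB_of_quotient {G H : Type*} [Group G] [TopologicalSpace G] [Group H]
    [TopologicalSpace H] (f : G →* H) (hc : Continuous f) (ho : IsOpenMap f)
    (hs : Function.Surjective f) (h : HasONB G) : HasONB H := by
  intro O hO h1
  obtain ⟨V, hVn, hVo, hVsub⟩ := h (f ⁻¹' O) (hO.preimage hc) (by simpa using h1)
  refine ⟨V.map f, hVn.map f hs, ?_, ?_⟩
  · rw [Subgroup.coe_map]; exact ho _ hVo
  · rw [Subgroup.coe_map]; rintro _ ⟨x, hx, rfl⟩; exact hVsub hx

lemma isNilpotent_map_of_isPronilpotent {H : Type*} [Group H] [TopologicalSpace H]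
    (V : Subgroup H) (hVn : V.Normal) (hVo : IsOpen (V : Set H)) (X : Subgroup H)
    (hX : IsPronilpotent X) :
    haveI := hVn
    Group.IsNilpotent ↥(X.map (QuotientGroup.mk' V)) := by
  haveI := hVn
  have h1 : (V.subgroupOf X).Normal := hVn.subgroupOf X
  have h2 : IsOpen ((V.subgroupOf X : Subgroup ↥X) : Set ↥X) := Subgroup.subgroupOf_isOpen _ _ hVo
  haveI := hX _ h1 h2
  exact nilpotent_of_mulEquiv (quotSubgroupOfEquivMap V X)

/-- The closure of the normal closure of a pronilpotent subgroup normalised by a normal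
subgroup containing it, in a compact group with an open-normal basis, is pronilpotent. -/
lemma exists_pronilpotent_normal {H : Type*} [Group H] [TopologicalSpace H] [IsTopologicalGroup H]
    [CompactSpace H] (honb : HasONB H) (M P : Subgroup H) (hMn : M.Normal)
    (hPM : P ≤ M) (hPnil : IsPronilpotent P)
    (hPconj : ∀ m ∈ M, ∀ x ∈ P, m * x * m⁻¹ ∈ P) :
    ∃ Q : Subgroup H, Q.Normal ∧ IsClosed (Q : Set H) ∧ IsPronilpotent Q ∧ P ≤ Q := by
  set NC := Subgroup.normalClosure (P : Set H) with hNCdef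
  set Q := NC.topologicalClosure with hQdef
  have hQn : Q.Normal := Subgroup.is_normal_topologicalClosure NC
  refine ⟨Q, hQn, Subgroup.isClosed_topologicalClosure NC, ?_,
    le_trans (fun x hx => Subgroup.subset_normalClosure hx) (Subgroup.le_topologicalClosure NC)⟩
  intro W hWn hWo
  haveI := hWn
  obtain ⟨O, hOopen, hOpre⟩ := isOpen_induced_iff.mp hWo
  have h1O : (1 : H) ∈ O := by
    have : ((1 : ↥Q) : H) ∈ O := by
      have h1W : (1 : ↥Q) ∈ (W : Set ↥Q) := W.one_mem
      rw [← hOpre] at h1W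
      exact h1W
    simpa using this
  obtain ⟨V, hVn, hVo, hVsub⟩ := honb O hOopen h1O
  haveI := hVn
  have hVW : V.subgroupOf Q ≤ W := by
    intro x hx
    have hxO : (x : H) ∈ O := hVsub hx
    have : x ∈ (W : Set ↥Q) := by rw [← hOpre]; exact hxO
    exact this
  haveI hdisc : DiscreteTopology (H ⧸ V) := QuotientGroup.discreteTopology hVo
  haveI hfin : Finite (H ⧸ V) := Subgroup.quotient_finite_of_isOpen V hVo
  set π := QuotientGroup.mk' V with hπ
  -- image of Q in the finite quotient equals the image of the normal closure
  have hπcont : Continuous ⇑π := QuotientGroup.continuous_mk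
  have hQmap : Q.map π = NC.map π := by
    apply le_antisymm
    · rintro _ ⟨x, hx, rfl⟩
      have hxc : x ∈ _root_.closure (NC : Set H) := hx
      have hmem : π x ∈ _root_.closure (⇑π '' (NC : Set H)) :=
        image_closure_subset_closure_image hπcont ⟨x, hxc, rfl⟩
      rw [IsClosed.closure_eq (isClosed_discrete _)] at hmem
      obtain ⟨z, hz, hzx⟩ := hmem
      exact hzx ▸ Subgroup.mem_map_of_mem _ hz
    · exact Subgroup.map_mono (Subgroup.le_topologicalClosure _)
  -- the image of the normal closure is a finite join of conjugates of the image of P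
  set P1 := P.map π with hP1def
  set M1 := M.map π with hM1def
  have hP1M1 : P1 ≤ M1 := Subgroup.map_mono hPM
  have hM1n : M1.Normal := hMn.map _ (QuotientGroup.mk'_surjective V)
  have hP1conj : ∀ m ∈ M1, ∀ x ∈ P1, m * x * m⁻¹ ∈ P1 := by
    rintro _ ⟨m, hm, rfl⟩ _ ⟨x, hx, rfl⟩
    rw [← map_inv, ← map_mul, ← map_mul]
    exact Subgroup.mem_map_of_mem _ (hPconj m hm x hx)
  have hP1nil : Group.IsNilpotent ↥P1 := isNilpotent_map_of_isPronilpotent V hVn hVo P hPnil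
  have hconj_le : ∀ y : H ⧸ V, P1.map (MulAut.conj y).toMonoidHom ≤ M1 := by
    rintro y _ ⟨x, hx, rfl⟩
    exact hM1n.conj_mem _ (hP1M1 hx) y
  have hconj_norm : ∀ y : H ⧸ V, ∀ c ∈ M1, ∀ x ∈ P1.map (MulAut.conj y).toMonoidHom,
      c * x * c⁻¹ ∈ P1.map (MulAut.conj y).toMonoidHom := by
    rintro y c hc _ ⟨p, hp, rfl⟩
    have hcy : y⁻¹ * c * y ∈ M1 := by
      have := hM1n.conj_mem c hc y⁻¹
      simpa using this
    refine ⟨(y⁻¹ * c * y) * p * (y⁻¹ * c * y)⁻¹, hP1conj _ hcy p hp, ?_⟩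
    show y * ((y⁻¹ * c * y) * p * (y⁻¹ * c * y)⁻¹) * y⁻¹ = c * (y * p * y⁻¹) * c⁻¹
    group
  have hconj_nil : ∀ y : H ⧸ V, Group.IsNilpotent ↥(P1.map (MulAut.conj y).toMonoidHom) := by
    intro y
    haveI := hP1nil
    exact nilpotent_of_mulEquiv
      (Subgroup.equivMapOfInjective P1 (MulAut.conj y).toMonoidHom (MulAut.conj y).injective)
  have hsup_nil : Group.IsNilpotent ↥(⨆ y : H ⧸ V, P1.map (MulAut.conj y).toMonoidHom) :=
    fitting_iSup _ M1 hconj_le hconj_norm hconj_nil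
  have hNCmap : NC.map π = ⨆ y : H ⧸ V, P1.map (MulAut.conj y).toMonoidHom := by
    rw [hNCdef, Subgroup.map_normalClosure _ _ (QuotientGroup.mk'_surjective V)]
    have himg : ⇑π '' (P : Set H) = (P1 : Set (H ⧸ V)) := (Subgroup.coe_map _ _).symm
    rw [himg]
    haveI hsupn : (⨆ y : H ⧸ V, P1.map (MulAut.conj y).toMonoidHom).Normal := by
      constructor
      intro x hx g
      refine Subgroup.iSup_induction _ (C := fun x => g * x * g⁻¹ ∈
        ⨆ y : H ⧸ V, P1.map (MulAut.conj y).toMonoidHom) hx ?_ ?_ ?_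
      · rintro y _ ⟨p, hp, rfl⟩
        refine le_iSup (fun y : H ⧸ V => P1.map (MulAut.conj y).toMonoidHom) (g * y) ?_
        refine ⟨p, hp, ?_⟩
        show (g * y) * p * (g * y)⁻¹ = g * (y * p * y⁻¹) * g⁻¹
        group
      · simpa using Subgroup.one_mem _
      · intro a b ha hb
        have : g * (a * b) * g⁻¹ = g * a * g⁻¹ * (g * b * g⁻¹) := by group
        rw [this]; exact mul_mem ha hb
    apply le_antisymm
    · refine Subgroup.normalClosure_le_normal ?_
      intro x hx
      refine le_iSup (fun y : H ⧸ V => P1.map (MulAut.conj y).toMonoidHom) 1 ?_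
      refine ⟨x, hx, ?_⟩
      show (1 : H ⧸ V) * x * (1 : H ⧸ V)⁻¹ = x
      group
    · refine iSup_le fun y => ?_
      rintro _ ⟨p, hp, rfl⟩
      exact Subgroup.normalClosure_normal.conj_mem _ (Subgroup.subset_normalClosure hp) y
  -- conclude
  have hmapnil : Group.IsNilpotent ↥(Q.map π) := by
    rw [hQmap, hNCmap]
    exact hsup_nil
  haveI := hmapnil
  haveI hqnil : Group.IsNilpotent (↥Q ⧸ V.subgroupOf Q) :=
    nilpotent_of_mulEquiv (quotSubgroupOfEquivMap V Q).symm
  have hsurj : Function.Surjective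
      (QuotientGroup.map (V.subgroupOf Q) W (MonoidHom.id ↥Q) hVW) := by
    intro q
    obtain ⟨y, rfl⟩ := QuotientGroup.mk_surjective q
    exact ⟨QuotientGroup.mk y, rfl⟩
  exact nilpotent_of_surjective _ hsurj

end ONB

section Final

lemma continuous_symm_of_compact_t2 {X Y : Type*} [Group X] [Group Y]
    [TopologicalSpace X] [TopologicalSpace Y]
    [CompactSpace X] [T2Space Y] (e : X ≃* Y) (he : Continuous ⇑e) : Continuous ⇑e.symm := by
  have h := (Continuous.homeoOfEquivCompactToT2 (f := e.toEquiv) he).symm.continuous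
  exact h

lemma exists_generator_ne_bot {H : Type*} [Group H] [TopologicalSpace H] [IsTopologicalGroup H]
    [T1Space H] (h : genFitting H ≠ ⊥) :
    ∃ P : Subgroup H, ((P.Normal ∧ IsClosed (P : Set H) ∧ IsPronilpotent P) ∨ IsComponentPro P)
      ∧ P ≠ ⊥ := by
  by_contra hc
  push_neg at hc
  apply h
  unfold genFitting
  have hsup : (⨆ P ∈ {P : Subgroup H | (P.Normal ∧ IsClosed (P : Set H) ∧ IsPronilpotent P) ∨
      IsComponentPro P}, P) = ⊥ :=
    le_bot_iff.mp (iSup₂_le fun P hP => le_of_eq (hc P hP))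
  rw [hsup]
  exact le_bot_iff.mp (Subgroup.topologicalClosure_minimal ⊥ le_rfl
    (by rw [Subgroup.coe_bot]; exact isClosed_singleton))

end Final

end FRExt


/-- The class of Fitting-regular profinite groups is closed under extensions. -/
theorem fittingRegular_extension (G : Type*) [Group G] [TopologicalSpace G] [IsTopologicalGroup G] [CompactSpace G] [T2Space G] [TotallyDisconnectedSpace G]
    (N : Subgroup G) [N.Normal] (hNc : IsClosed (N : Set G))
    (h1 : FittingRegular N) (h2 : FittingRegular (G ⧸ N)) :
    FittingRegular G := by
  intro K hKn hKc hKne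
  haveI := hKn
  haveI : IsClosed (K : Set G) := hKc
  haveI : T3Space (G ⧸ K) := QuotientGroup.instT3Space K
  intro hdeg
  have hφc : Continuous ⇑(QuotientGroup.mk' K) := QuotientGroup.continuous_mk
  have hφs : Function.Surjective ⇑(QuotientGroup.mk' K) := QuotientGroup.mk'_surjective K
  by_cases hNK : N ≤ K
  · -- Case A : the quotient G ⧸ K is a quotient of G ⧸ N
    haveI : IsClosed (N : Set G) := hNc
    haveI : T3Space (G ⧸ N) := QuotientGroup.instT3Space N
    set K' := K.map (QuotientGroup.mk' N) with hK'def
    haveI hK'n : K'.Normal := hKn.map _ (QuotientGroup.mk'_surjective N)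
    have hK'c : IsClosed (K' : Set (G ⧸ N)) := by
      rw [Subgroup.coe_map]
      exact (hKc.isCompact.image QuotientGroup.continuous_mk).isClosed
    have hK'ne : K' ≠ ⊤ := by
      intro htop
      obtain ⟨g, hg⟩ : ∃ g : G, g ∉ K := by
        by_contra hall
        push_neg at hall
        exact hKne ((Subgroup.eq_top_iff' K).mpr hall)
      have hgK' : QuotientGroup.mk' N g ∈ K' := htop ▸ Subgroup.mem_top _
      obtain ⟨k, hk, hkg⟩ := hgK'
      have hdiv : k⁻¹ * g ∈ N := QuotientGroup.eq.mp hkg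
      exact hg (by simpa using K.mul_mem hk (hNK hdiv))
    set E : (G ⧸ N) ⧸ K' ≃* G ⧸ K := QuotientGroup.quotientQuotientEquivQuotient N K hNK with hEdef
    have hEc : Continuous ⇑E := by
      rw [(QuotientGroup.isQuotientMap_mk K').continuous_iff]
      rw [(QuotientGroup.isQuotientMap_mk N).continuous_iff]
      have : (⇑E ∘ QuotientGroup.mk ∘ QuotientGroup.mk : G → G ⧸ K) = QuotientGroup.mk := by
        funext x
        show E ((x : G ⧸ N) : (G ⧸ N) ⧸ K') = (x : G ⧸ K)
        have heq : ⇑E = ⇑(QuotientGroup.quotientQuotientEquivQuotientAux N K hNK) := by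
          rw [hEdef]; rfl
        rw [heq]
        exact QuotientGroup.quotientQuotientEquivQuotientAux_mk_mk N K hNK x
      rw [Function.comp_assoc, this]
      exact QuotientGroup.continuous_mk
    have hEs : Continuous ⇑E.symm := FRExt.continuous_symm_of_compact_t2 E hEc
    exact h2 K' hK'n hK'c hK'ne (FRExt.fittingDegenerate_of_equiv E hEc hEs hdeg)
  · -- Case B : the image of N in G ⧸ K is a nontrivial closed normal subgroup
    have honbH : FRExt.HasONB (G ⧸ K) :=
      FRExt.hasONB_of_quotient (QuotientGroup.mk' K) hφc QuotientGroup.isOpenMap_coe hφs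
        (FRExt.hasONB_of_profinite G)
    set M := N.map (QuotientGroup.mk' K) with hMdef
    have hMne : M ≠ ⊥ := by
      intro h
      apply hNK
      intro n hn
      have hmem : QuotientGroup.mk' K n ∈ M := Subgroup.mem_map_of_mem _ hn
      rw [h, Subgroup.mem_bot] at hmem
      exact (QuotientGroup.eq_one_iff n).mp hmem
    have hMc : IsClosed (M : Set (G ⧸ K)) := by
      rw [Subgroup.coe_map]
      exact (hNc.isCompact.image hφc).isClosed
    have hMn : M.Normal := ‹N.Normal›.map _ hφs
    set ψ : ↥N →* ↥M :=
      ((QuotientGroup.mk' K).comp N.subtype).codRestrict M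
        (fun n => Subgroup.mem_map_of_mem _ n.2) with hψdef
    have hψs : Function.Surjective ⇑ψ := by
      rintro ⟨m, hm⟩
      obtain ⟨x, hx, rfl⟩ := hm
      exact ⟨⟨x, hx⟩, rfl⟩
    have hψc : Continuous ⇑ψ :=
      Continuous.subtype_mk (hφc.comp continuous_subtype_val) _
    set L := ψ.ker with hLdef
    haveI hLn : L.Normal := MonoidHom.normal_ker ψ
    have hLc : IsClosed (L : Set ↥N) := by
      have : (L : Set ↥N) = ⇑ψ ⁻¹' {1} := by
        ext x
        simp [hLdef, MonoidHom.mem_ker]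
      rw [this]
      exact isClosed_singleton.preimage hψc
    have hLne : L ≠ ⊤ := by
      intro htop
      apply hMne
      rw [eq_bot_iff]
      intro m hm
      obtain ⟨n, hn⟩ := hψs ⟨m, hm⟩
      have hnL : n ∈ L := htop ▸ Subgroup.mem_top n
      have h1 : ψ n = 1 := hnL
      rw [h1] at hn
      rw [Subgroup.mem_bot]
      exact (Subtype.ext_iff.mp hn).symm
    have hnotdeg := h1 L hLn hLc hLne
    set E2 := QuotientGroup.quotientKerEquivOfSurjective (φ := ψ) hψs with hE2def
    have hE2c : Continuous ⇑E2 := by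
      rw [(QuotientGroup.isQuotientMap_mk L).continuous_iff]
      have : (⇑E2 ∘ QuotientGroup.mk : ↥N → ↥M) = ⇑ψ := by
        funext x
        rfl
      rw [this]
      exact hψc
    haveI : CompactSpace ↥N := isCompact_iff_compactSpace.mp hNc.isCompact
    have hE2s : Continuous ⇑E2.symm := FRExt.continuous_symm_of_compact_t2 E2 hE2c
    have hMnotdeg : ¬ FittingDegenerate ↥M :=
      fun hd => hnotdeg (FRExt.fittingDegenerate_of_equiv E2 hE2c hE2s hd)
    obtain ⟨P, hPgen, hPne⟩ := FRExt.exists_generator_ne_bot hMnotdeg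
    set P' := P.map M.subtype with hP'def
    have hP'ne : P' ≠ ⊥ := fun h =>
      hPne ((P.map_eq_bot_iff_of_injective M.subtype_injective).mp h)
    have hgenle : ∀ R : Subgroup (G ⧸ K),
        ((R.Normal ∧ IsClosed (R : Set (G ⧸ K)) ∧ IsPronilpotent R) ∨ IsComponentPro R) →
        R ≤ genFitting (G ⧸ K) := by
      intro R hR
      exact le_trans (le_iSup₂ (f := fun (S : Subgroup (G ⧸ K)) (_ : S ∈ _) => S) R hR)
        (Subgroup.le_topologicalClosure _)
    have hdeg' : genFitting (G ⧸ K) = ⊥ := hdeg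
    rcases hPgen with ⟨hn, hc, hpro⟩ | hcomp
    · -- pronilpotent case
      have hP'M : P' ≤ M := Subgroup.map_subtype_le P
      have hP'pro : IsPronilpotent ↥P' :=
        FRExt.isPronilpotent_of_equiv
          (Subgroup.equivMapOfInjective P M.subtype M.subtype_injective)
          (FRExt.continuous_equivMapOfInjective M.subtype M.subtype_injective
            continuous_subtype_val P) hpro
      have hP'conj : ∀ m ∈ M, ∀ x ∈ P', m * x * m⁻¹ ∈ P' := by
        rintro m hm _ ⟨p, hp, rfl⟩
        exact ⟨(⟨m, hm⟩ : ↥M) * p * (⟨m, hm⟩ : ↥M)⁻¹, hn.conj_mem p hp ⟨m, hm⟩, rfl⟩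
      obtain ⟨Q, hQn, hQc, hQpro, hPQ⟩ :=
        FRExt.exists_pronilpotent_normal honbH M P' hMn hP'M hP'pro hP'conj
      have hQle : Q ≤ genFitting (G ⧸ K) := hgenle Q (Or.inl ⟨hQn, hQc, hQpro⟩)
      rw [hdeg'] at hQle
      exact hP'ne (le_bot_iff.mp (hPQ.trans hQle))
    · -- component case
      have hcomp' : IsComponentPro P' := FRExt.isComponentPro_map_subtype hMn hMc P hcomp
      have hP'le : P' ≤ genFitting (G ⧸ K) := hgenle P' (Or.inr hcomp')
      rw [hdeg'] at hP'le
      exact hP'ne (le_bot_iff.mp hP'le)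
end

section
/- Let G be a profinite group and let R = O^[FD](G) be the intersection of all closed normal subgroups K such that G/K is Fitting-degenerate. Then G/R is Fitting-degenerate and R is Fitting-regular. -/
/-! ### Auxiliary machinery -/

def FSub (X : Type*) [Group X] [TopologicalSpace X] (H : Subgroup X) : Prop :=
  (H.Normal ∧ IsClosed (H : Set X) ∧ IsPronilpotent H) ∨ IsComponentPro H

section A
variable {X : Type*} [Group X] [TopologicalSpace X] [IsTopologicalGroup X]

theorem fsub_eq_bot_of_fd (hfd : FittingDegenerate X) {H : Subgroup X} (hH : FSub X H) :
    H = ⊥ := by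
  have h1 : H ≤ genFitting X :=
    le_trans (le_iSup₂ (f := fun (H : Subgroup X) (_ : H ∈ {H : Subgroup X |
        (H.Normal ∧ IsClosed (H : Set X) ∧ IsPronilpotent H) ∨ IsComponentPro H}) => H) H hH)
      (Subgroup.le_topologicalClosure _)
  rw [hfd] at h1
  exact le_bot_iff.mp h1

theorem fd_of_fsub [T1Space X] (h : ∀ H : Subgroup X, FSub X H → H = ⊥) :
    FittingDegenerate X := by
  unfold FittingDegenerate genFitting
  have hsup : (⨆ H ∈ {H : Subgroup X | (H.Normal ∧ IsClosed (H : Set X) ∧ IsPronilpotent H) ∨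
      IsComponentPro H}, H) = ⊥ :=
    le_bot_iff.mp (iSup₂_le fun H hH => (h H hH).le)
  rw [hsup]
  refine le_bot_iff.mp (Subgroup.topologicalClosure_minimal _ le_rfl ?_)
  rw [Subgroup.coe_bot]
  exact isClosed_singleton

end A

theorem isPronilpotent_of_surjective {A B : Type*} [Group A] [TopologicalSpace A] [Group B]
    [TopologicalSpace B] (f : A →* B) (hc : Continuous f) (hs : Function.Surjective f)
    (hA : IsPronilpotent A) : IsPronilpotent B := by
  intro N' hN' hopen
  haveI := hN'
  have hN : (N'.comap f).Normal := hN'.comap f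
  haveI := hN
  have hopen' : IsOpen ((N'.comap f : Subgroup A) : Set A) := by
    rw [Subgroup.coe_comap]
    exact hopen.preimage hc
  haveI : Group.IsNilpotent (A ⧸ N'.comap f) := hA _ hN hopen'
  have hsur : Function.Surjective (QuotientGroup.map (N'.comap f) N' f le_rfl) := by
    intro y
    obtain ⟨b, rfl⟩ := QuotientGroup.mk_surjective y
    obtain ⟨a, rfl⟩ := hs b
    exact ⟨QuotientGroup.mk a, by rw [QuotientGroup.map_mk]⟩
  exact nilpotent_of_surjective _ hsur

theorem not_all_central {Q' : Type*} [Group Q'] [Nontrivial Q'] (hc : commutator Q' = ⊤)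
    (h : ∀ y : Q', y ∈ Subgroup.center Q') : False := by
  obtain ⟨y, z, hyz⟩ := exists_pair_ne Q'
  have hbot : commutator Q' ≤ ⊥ := by
    rw [commutator_def, Subgroup.commutator_le]
    intro g₁ _ g₂ _
    rw [Subgroup.mem_bot, commutatorElement_def]
    have h1 := (Subgroup.mem_center_iff.mp (h g₁)) g₂
    rw [← h1]
    group
  rw [hc] at hbot
  have hy := Subgroup.mem_bot.mp (hbot (Subgroup.mem_top y))
  have hz := Subgroup.mem_bot.mp (hbot (Subgroup.mem_top z))
  exact hyz (by rw [hy, hz])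

theorem isQuasisimple_of_surjective {Q Q' : Type*} [Group Q] [Group Q'] (f : Q →* Q')
    (hs : Function.Surjective f) (hQ : IsQuasisimple Q) (hnt : Nontrivial Q') :
    IsQuasisimple Q' := by
  obtain ⟨hperf, hsimple⟩ := hQ
  haveI := hsimple
  set Z := Subgroup.center Q with hZ
  have hperf' : commutator Q' = ⊤ := by
    rw [commutator_def, ← Subgroup.map_top_of_surjective f hs, ← Subgroup.map_commutator,
      ← commutator_def, hperf, Subgroup.map_top_of_surjective f hs]
  -- key decomposition lemma
  have key : ∀ M : Subgroup Q, M.map (QuotientGroup.mk' Z) = ⊤ →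
      ∀ q : Q, ∃ m ∈ M, ∃ z ∈ Z, m * z = q := by
    intro M hM q
    have hq : QuotientGroup.mk' Z q ∈ M.map (QuotientGroup.mk' Z) := by
      rw [hM]; trivial
    obtain ⟨m, hm, hmq⟩ := hq
    obtain ⟨z, hz, hzq⟩ := (QuotientGroup.mk'_eq_mk' Z).mp hmq
    exact ⟨m, hm, z, hz, hzq⟩
  have hZcent : ∀ z ∈ Z, f z ∈ Subgroup.center Q' := by
    intro z hz
    rw [Subgroup.mem_center_iff]
    intro y
    obtain ⟨q, rfl⟩ := hs y
    rw [← map_mul, ← map_mul, (Subgroup.mem_center_iff.mp hz) q]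
  -- claim A : f.ker ≤ Z
  have hkerZ : f.ker ≤ Z := by
    have hnorm : ((f.ker).map (QuotientGroup.mk' Z)).Normal :=
      (MonoidHom.normal_ker f).map _ (QuotientGroup.mk'_surjective Z)
    rcases hnorm.eq_bot_or_eq_top with hb | ht
    · have := (Subgroup.map_eq_bot_iff _).mp hb
      rwa [QuotientGroup.ker_mk'] at this
    · exfalso
      apply not_all_central hperf'
      intro y
      obtain ⟨q, rfl⟩ := hs y
      obtain ⟨m, hm, z, hz, hzq⟩ := key _ ht q
      have : f q = f z := by
        rw [← hzq, map_mul, MonoidHom.mem_ker.mp hm, one_mul]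
      rw [this]
      exact hZcent z hz
  -- claim B : comap f (center Q') = Z
  have hcomap : (Subgroup.center Q').comap f = Z := by
    have hZle : Z ≤ (Subgroup.center Q').comap f := fun z hz => hZcent z hz
    have hnorm : (((Subgroup.center Q').comap f).map (QuotientGroup.mk' Z)).Normal :=
      (Subgroup.normal_comap f).map _ (QuotientGroup.mk'_surjective Z)
    rcases hnorm.eq_bot_or_eq_top with hb | ht
    · have := (Subgroup.map_eq_bot_iff _).mp hb
      rw [QuotientGroup.ker_mk'] at this
      exact le_antisymm this hZle
    · exfalso
      have hMtop : (Subgroup.center Q').comap f = ⊤ := by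
        rw [eq_top_iff]
        intro q _
        obtain ⟨m, hm, z, hz, hzq⟩ := key _ ht q
        rw [← hzq]
        exact Subgroup.mul_mem _ hm (hZle hz)
      have : Subgroup.center Q' = ⊤ := by
        rw [← Subgroup.map_comap_eq_self_of_surjective hs (Subgroup.center Q'), hMtop,
          Subgroup.map_top_of_surjective f hs]
      exact not_all_central hperf' (fun y => this ▸ Subgroup.mem_top y)
  -- build the equivalence
  refine ⟨hperf', ?_⟩
  have hgs : Function.Surjective ((QuotientGroup.mk' (Subgroup.center Q')).comp f) :=
    (QuotientGroup.mk'_surjective _).comp hs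
  have hker : ((QuotientGroup.mk' (Subgroup.center Q')).comp f).ker = Z := by
    rw [← MonoidHom.comap_ker, QuotientGroup.ker_mk', hcomap]
  have e : Q ⧸ Z ≃* Q' ⧸ Subgroup.center Q' :=
    (QuotientGroup.quotientMulEquivOfEq hker.symm).trans
      (QuotientGroup.quotientKerEquivOfSurjective _ hgs)
  haveI : Nontrivial (Q' ⧸ Subgroup.center Q') := e.symm.toEquiv.nontrivial
  exact IsSimpleGroup.isSimpleGroup_of_surjective e.toMonoidHom e.surjective

theorem isSubnormal_map {X Y : Type*} [Group X] [Group Y] (f : X →* Y)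
    (hs : Function.Surjective f) {H : Subgroup X} (h : IsSubnormalSub H) :
    IsSubnormalSub (H.map f) := by
  obtain ⟨n, s, h0, hn, hstep⟩ := h
  refine ⟨n, fun i => (s i).map f, by show Subgroup.map f (s 0) = _; rw [h0],
    by show Subgroup.map f (s n) = _; rw [hn, Subgroup.map_top_of_surjective f hs], ?_⟩
  intro i hi
  obtain ⟨hle, hnorm⟩ := hstep i hi
  refine ⟨Subgroup.map_mono hle, ⟨?_⟩⟩
  intro nn hnn g
  rw [Subgroup.mem_subgroupOf] at hnn ⊢
  obtain ⟨a, ha, hfa⟩ := hnn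
  obtain ⟨b, hb, hfb⟩ := g.2
  have hmem : (⟨b, hb⟩ : ↥(s (i+1))) * ⟨a, hle ha⟩ * (⟨b, hb⟩ : ↥(s (i+1)))⁻¹ ∈
      (s i).subgroupOf (s (i+1)) :=
    hnorm.conj_mem ⟨a, hle ha⟩ (Subgroup.mem_subgroupOf.mpr ha) ⟨b, hb⟩
  rw [Subgroup.mem_subgroupOf] at hmem
  refine ⟨b * a * b⁻¹, hmem, ?_⟩
  push_cast
  rw [map_mul, map_mul, map_inv, hfa, hfb]

theorem isComponent_map {X Y : Type*} [Group X] [TopologicalSpace X] [Group Y]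
    [TopologicalSpace Y] [T1Space Y] (f : X →* Y) (hc : Continuous f)
    (hs : Function.Surjective f) {H : Subgroup X} (h : IsComponentPro H)
    (hnt : H.map f ≠ ⊥) : IsComponentPro (H.map f) := by
  obtain ⟨hsn, hcl, hfin, hqs⟩ := h
  haveI := hfin
  haveI hfin' : Finite (H.map f) := Finite.of_surjective _ (f.subgroupMap_surjective H)
  refine ⟨isSubnormal_map f hs hsn, ?_, hfin', ?_⟩
  · exact (Set.toFinite _).isClosed
  · haveI : Nontrivial (H.map f) := (Subgroup.nontrivial_iff_ne_bot _).mpr hnt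
    exact isQuasisimple_of_surjective (f.subgroupMap H) (f.subgroupMap_surjective H) hqs this

theorem continuous_subgroupMap {X Y : Type*} [Group X] [TopologicalSpace X] [Group Y]
    [TopologicalSpace Y] (f : X →* Y) (hc : Continuous f) (H : Subgroup X) :
    Continuous (f.subgroupMap H) := by
  apply Continuous.subtype_mk
  exact hc.comp continuous_subtype_val

theorem fsub_map {X Y : Type*} [Group X] [TopologicalSpace X] [IsTopologicalGroup X]
    [CompactSpace X] [Group Y] [TopologicalSpace Y] [IsTopologicalGroup Y] [T2Space Y]
    (f : X →* Y) (hc : Continuous f) (hs : Function.Surjective f) {H : Subgroup X}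
    (h : FSub X H) (hnt : H.map f ≠ ⊥) : FSub Y (H.map f) := by
  rcases h with ⟨hnorm, hcl, hpro⟩ | hcomp
  · left
    refine ⟨hnorm.map f hs, ?_, ?_⟩
    · rw [Subgroup.coe_map]
      exact (hcl.isCompact.image hc).isClosed
    · exact isPronilpotent_of_surjective (f.subgroupMap H) (continuous_subgroupMap f hc H)
        (f.subgroupMap_surjective H) hpro
  · exact Or.inr (isComponent_map f hc hs hcomp hnt)

theorem fsub_le_ker {X Y : Type*} [Group X] [TopologicalSpace X] [IsTopologicalGroup X]
    [CompactSpace X] [Group Y] [TopologicalSpace Y] [IsTopologicalGroup Y] [T2Space Y]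
    (f : X →* Y) (hc : Continuous f) (hs : Function.Surjective f)
    (hfd : FittingDegenerate Y) {H : Subgroup X} (h : FSub X H) : H ≤ f.ker := by
  by_cases hb : H.map f = ⊥
  · exact (Subgroup.map_eq_bot_iff _).mp hb
  · exact absurd (fsub_eq_bot_of_fd hfd (fsub_map f hc hs h hb)) hb

/-- The tautological hom from `H` to `H.subgroupOf M` when `H ≤ M`. -/
def resHom {X : Type*} [Group X] {H M : Subgroup X} (h : H ≤ M) : H →* H.subgroupOf M where
  toFun x := ⟨⟨x, h x.2⟩, x.2⟩
  map_one' := rfl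
  map_mul' _ _ := rfl

theorem resHom_surjective {X : Type*} [Group X] {H M : Subgroup X} (h : H ≤ M) :
    Function.Surjective (resHom h) := by
  rintro ⟨⟨y, hyM⟩, hyH⟩
  exact ⟨⟨y, hyH⟩, rfl⟩

theorem resHom_continuous {X : Type*} [Group X] [TopologicalSpace X] {H M : Subgroup X}
    (h : H ≤ M) : Continuous (resHom h) := by
  apply Continuous.subtype_mk
  apply Continuous.subtype_mk
  exact continuous_subtype_val

theorem quasisimple_nontrivial {Q : Type*} [Group Q] (h : IsQuasisimple Q) : Nontrivial Q := by
  by_contra hn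
  rw [not_nontrivial_iff_subsingleton] at hn
  haveI := h.2
  obtain ⟨x, y, hxy⟩ := exists_pair_ne (Q ⧸ Subgroup.center Q)
  obtain ⟨a, rfl⟩ := QuotientGroup.mk_surjective x
  obtain ⟨b, rfl⟩ := QuotientGroup.mk_surjective y
  exact hxy (by rw [Subsingleton.elim a b])

theorem fsub_subgroupOf {X : Type*} [Group X] [TopologicalSpace X] [IsTopologicalGroup X]
    {H M : Subgroup X} (hHM : H ≤ M) (h : FSub X H) : FSub ↥M (H.subgroupOf M) := by
  have hclres : IsClosed (H : Set X) → IsClosed ((H.subgroupOf M : Subgroup ↥M) : Set ↥M) := by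
    intro hcl
    have : ((H.subgroupOf M : Subgroup ↥M) : Set ↥M) = (M.subtype) ⁻¹' (H : Set X) := by
      rw [Subgroup.subgroupOf, Subgroup.coe_comap]
    rw [this]
    exact hcl.preimage continuous_subtype_val
  rcases h with ⟨hnorm, hcl, hpro⟩ | ⟨hsn, hcl, hfin, hqs⟩
  · left
    refine ⟨⟨?_⟩, hclres hcl, ?_⟩
    · intro n hn g
      rw [Subgroup.mem_subgroupOf] at hn ⊢
      have := hnorm.conj_mem _ hn (g : X)
      simpa using this
    · exact isPronilpotent_of_surjective (resHom hHM) (resHom_continuous hHM)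
        (resHom_surjective hHM) hpro
  · right
    haveI := hfin
    refine ⟨?_, hclres hcl, Finite.of_surjective _ (resHom_surjective hHM), ?_⟩
    · obtain ⟨n, s, h0, hn, hstep⟩ := hsn
      refine ⟨n, fun i => (s i).subgroupOf M, by show (s 0).subgroupOf M = _; rw [h0],
        by show (s n).subgroupOf M = _; rw [hn, Subgroup.top_subgroupOf], ?_⟩
      intro i hi
      obtain ⟨hle, hnorm⟩ := hstep i hi
      refine ⟨Subgroup.comap_mono hle, ⟨?_⟩⟩
      intro nn hnn g
      rw [Subgroup.mem_subgroupOf] at hnn ⊢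
      rw [Subgroup.mem_subgroupOf] at hnn ⊢
      have hgmem : ((g : ↥M) : X) ∈ s (i + 1) := Subgroup.mem_subgroupOf.mp g.2
      have := hnorm.conj_mem (⟨((nn : ↥M) : X), hle (Subgroup.mem_subgroupOf.mp hnn)⟩ : ↥(s (i+1)))
        (Subgroup.mem_subgroupOf.mpr ?_) (⟨((g : ↥M) : X), hgmem⟩ : ↥(s (i+1)))
      · rw [Subgroup.mem_subgroupOf] at this
        simpa using this
      · exact Subgroup.mem_subgroupOf.mp hnn
    · haveI : Nontrivial (H.subgroupOf M) := by
        haveI := quasisimple_nontrivial hqs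
        obtain ⟨x, y, hxy⟩ := exists_pair_ne ↥H
        refine ⟨resHom hHM x, resHom hHM y, fun hxy' => hxy ?_⟩
        ext
        have h2 : ((resHom hHM x : ↥M) : X) = ((resHom hHM y : ↥M) : X) := by rw [hxy']
        exact h2
      exact isQuasisimple_of_surjective (resHom hHM) (resHom_surjective hHM) hqs this

/-- Conjugation by `g` as a hom of a normal subgroup. -/
def conjHom {G : Type*} [Group G] (R : Subgroup G) (hRn : R.Normal) (g : G) : ↥R →* ↥R where
  toFun x := ⟨g * x * g⁻¹, hRn.conj_mem x.1 x.2 g⟩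
  map_one' := by ext; simp
  map_mul' x y := by ext; push_cast; group

@[simp] theorem conjHom_coe {G : Type*} [Group G] (R : Subgroup G) (hRn : R.Normal) (g : G)
    (x : ↥R) : ((conjHom R hRn g x : ↥R) : G) = g * (x : G) * g⁻¹ := rfl

theorem conjHom_surjective {G : Type*} [Group G] (R : Subgroup G) (hRn : R.Normal) (g : G) :
    Function.Surjective (conjHom R hRn g) := by
  intro y
  refine ⟨⟨g⁻¹ * (y : G) * g, by simpa using hRn.conj_mem y.1 y.2 g⁻¹⟩, ?_⟩
  ext
  rw [conjHom_coe]
  group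

theorem conjHom_continuous {G : Type*} [Group G] [TopologicalSpace G] [IsTopologicalGroup G]
    (R : Subgroup G) (hRn : R.Normal) (g : G) : Continuous (conjHom R hRn g) := by
  apply Continuous.subtype_mk
  exact (continuous_const.mul continuous_subtype_val).mul continuous_const

/-- The Fitting-degenerate residual `R = O^[FD](G)`: `G/R` is Fitting-degenerate
and `R` is Fitting-regular. -/
theorem fd_residual (G : Type*) [Group G] [TopologicalSpace G] [IsTopologicalGroup G] [CompactSpace G] [T2Space G] [TotallyDisconnectedSpace G]
    (R : Subgroup G) [R.Normal]
    (hR : R = sInf {K : Subgroup G | ∃ hK : K.Normal, IsClosed (K : Set G) ∧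
      (haveI := hK; FittingDegenerate (G ⧸ K))}) :
    FittingDegenerate (G ⧸ R) ∧ FittingRegular R := by
  have hRn : R.Normal := inferInstance
  set S := {K : Subgroup G | ∃ hK : K.Normal, IsClosed (K : Set G) ∧
      (haveI := hK; FittingDegenerate (G ⧸ K))} with hS
  have hRcl : IsClosed (R : Set G) := by
    rw [hR, Subgroup.coe_sInf]
    exact isClosed_biInter fun K hK => hK.choose_spec.1
  haveI : IsClosed (R : Set G) := hRcl
  -- Part 1 : G ⧸ R is Fitting-degenerate
  have fd1 : FittingDegenerate (G ⧸ R) := by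
    apply fd_of_fsub
    intro H hH
    rw [eq_bot_iff]
    intro x hx
    rw [Subgroup.mem_bot]
    obtain ⟨g, rfl⟩ := QuotientGroup.mk_surjective x
    rw [QuotientGroup.eq_one_iff]
    rw [hR, Subgroup.mem_sInf]
    intro K hK
    have hRK : R ≤ K := hR ▸ sInf_le hK
    obtain ⟨hKn, hKcl, hKfd⟩ := hK
    haveI := hKn
    haveI : IsClosed (K : Set G) := hKcl
    set fK := QuotientGroup.map R K (MonoidHom.id G) (show R ≤ K.comap (MonoidHom.id G) from fun a ha => hRK ha) with hfK
    have hfKc : Continuous fK := by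
      rw [(QuotientGroup.isQuotientMap_mk R).continuous_iff]
      have he : (fK ∘ (QuotientGroup.mk : G → G ⧸ R)) = fun a : G => (QuotientGroup.mk a : G ⧸ K) := by
        funext a
        simp [hfK]
      rw [he]
      exact QuotientGroup.continuous_mk
    have hfKs : Function.Surjective fK := by
      intro y
      obtain ⟨a, rfl⟩ := QuotientGroup.mk_surjective y
      exact ⟨QuotientGroup.mk a, by
        simp [hfK]⟩
    have hle := fsub_le_ker fK hfKc hfKs hKfd hH
    have h1 := hle hx
    rw [MonoidHom.mem_ker, hfK] at h1
    rw [QuotientGroup.map_mk] at h1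
    simpa using (QuotientGroup.eq_one_iff _).mp h1
  refine ⟨fd1, ?_⟩
  -- Part 2 : R is Fitting-regular
  intro N hNnorm hNcl hNtop hNfd
  haveI := hNnorm
  haveI hRcomp : CompactSpace ↥R := isCompact_iff_compactSpace.mp hRcl.isCompact
  haveI : IsClosed (N : Set ↥R) := hNcl
  set M : Subgroup ↥R := ⨅ g : G, N.comap (conjHom R hRn g) with hMdef
  have hMN : M ≤ N := by
    intro x hx
    have h1 := Subgroup.mem_iInf.mp hx 1
    rw [Subgroup.mem_comap] at h1
    have h2 : conjHom R hRn 1 x = x := Subtype.ext (by simp)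
    rwa [h2] at h1
  have hMnorm : M.Normal := by
    constructor
    intro n hn r
    rw [Subgroup.mem_iInf] at hn ⊢
    intro g
    rw [Subgroup.mem_comap, map_mul, map_mul, map_inv]
    exact hNnorm.conj_mem _ (Subgroup.mem_comap.mp (hn g)) _
  have hMcl : IsClosed (M : Set ↥R) := by
    rw [hMdef, Subgroup.coe_iInf]
    exact isClosed_iInter fun g => by
      rw [Subgroup.coe_comap]
      exact hNcl.preimage (conjHom_continuous R hRn g)
  haveI := hMnorm
  haveI : IsClosed (M : Set ↥R) := hMcl
  -- Step A : ↥R ⧸ M is Fitting-degenerate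
  have fdRM : FittingDegenerate (↥R ⧸ M) := by
    apply fd_of_fsub
    intro H hH
    rw [eq_bot_iff]
    intro x hx
    rw [Subgroup.mem_bot]
    obtain ⟨r, rfl⟩ := QuotientGroup.mk_surjective x
    rw [QuotientGroup.eq_one_iff, hMdef, Subgroup.mem_iInf]
    intro g
    rw [Subgroup.mem_comap]
    have hle : M ≤ N.comap (conjHom R hRn g) := hMdef ▸ iInf_le _ g
    set ψ := QuotientGroup.map M N (conjHom R hRn g) hle with hψ
    have hψc : Continuous ψ := by
      rw [(QuotientGroup.isQuotientMap_mk M).continuous_iff]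
      have he : (ψ ∘ (QuotientGroup.mk : ↥R → ↥R ⧸ M)) =
          fun r : ↥R => (QuotientGroup.mk (conjHom R hRn g r) : ↥R ⧸ N) := by
        funext a
        simp [hψ]
      rw [he]
      exact QuotientGroup.continuous_mk.comp (conjHom_continuous R hRn g)
    have hψs : Function.Surjective ψ := by
      intro y
      obtain ⟨a, rfl⟩ := QuotientGroup.mk_surjective y
      obtain ⟨b, rfl⟩ := conjHom_surjective R hRn g a
      exact ⟨QuotientGroup.mk b, by
        simp [hψ]⟩
    have h1 := fsub_le_ker ψ hψc hψs hNfd hH hx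
    rw [MonoidHom.mem_ker, hψ, QuotientGroup.map_mk] at h1
    exact (QuotientGroup.eq_one_iff _).mp h1
  -- the image of M in G
  have hMtnorm : (M.map R.subtype).Normal := by
    constructor
    rintro _ ⟨m, hm, rfl⟩ g
    have hm' : m ∈ M := hm
    refine ⟨conjHom R hRn g m, ?_, rfl⟩
    show conjHom R hRn g m ∈ M
    rw [hMdef, Subgroup.mem_iInf]
    intro h
    rw [Subgroup.mem_comap]
    have hcomp : conjHom R hRn h (conjHom R hRn g m) = conjHom R hRn (h * g) m :=
      Subtype.ext (by simp [mul_assoc])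
    rw [hcomp]
    exact Subgroup.mem_comap.mp (Subgroup.mem_iInf.mp (hMdef ▸ hm') (h * g))
  have hMtcl : IsClosed ((M.map R.subtype : Subgroup G) : Set G) := by
    rw [Subgroup.coe_map]
    exact (hMcl.isCompact.image continuous_subtype_val).isClosed
  haveI := hMtnorm
  haveI : IsClosed ((M.map R.subtype : Subgroup G) : Set G) := hMtcl
  have hleR : M.map R.subtype ≤ R := by
    rintro _ ⟨m, hm, rfl⟩
    exact m.2
  -- Step B : G ⧸ M.map R.subtype is Fitting-degenerate
  have fdG : FittingDegenerate (G ⧸ M.map R.subtype) := by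
    apply fd_of_fsub
    intro H hH
    set π := QuotientGroup.map (M.map R.subtype) R (MonoidHom.id G) (show M.map R.subtype ≤ R.comap (MonoidHom.id G) from fun a ha => hleR ha) with hπ
    have hπc : Continuous π := by
      rw [(QuotientGroup.isQuotientMap_mk _).continuous_iff]
      have he : (π ∘ (QuotientGroup.mk : G → G ⧸ M.map R.subtype)) =
          fun a : G => (QuotientGroup.mk a : G ⧸ R) := by
        funext a
        simp [hπ]
      rw [he]
      exact QuotientGroup.continuous_mk
    have hπs : Function.Surjective π := by
      intro y
      obtain ⟨a, rfl⟩ := QuotientGroup.mk_surjective y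
      exact ⟨QuotientGroup.mk a, by
        simp [hπ]⟩
    have hHR : H ≤ π.ker := fsub_le_ker π hπc hπs fd1 hH
    set RM := R.map (QuotientGroup.mk' (M.map R.subtype)) with hRM
    have hker : π.ker = RM := by
      ext x
      refine QuotientGroup.induction_on x ?_
      intro a
      rw [MonoidHom.mem_ker]
      constructor
      · intro h1
        rw [hπ, QuotientGroup.map_mk] at h1
        simp only [MonoidHom.id_apply] at h1
        exact ⟨a, (QuotientGroup.eq_one_iff a).mp h1, rfl⟩
      · rintro ⟨r, hr, hra⟩
        have : π ((QuotientGroup.mk' (M.map R.subtype)) r) = 1 := by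
          rw [hπ, QuotientGroup.map_mk']
          simp only [MonoidHom.id_apply]
          exact (QuotientGroup.eq_one_iff r).mpr hr
        rwa [hra] at this
    have hRMnorm : RM.Normal := hRn.map _ (QuotientGroup.mk'_surjective _)
    have hRMcl : IsClosed (RM : Set (G ⧸ M.map R.subtype)) := by
      rw [hRM, Subgroup.coe_map]
      exact (hRcl.isCompact.image QuotientGroup.continuous_mk).isClosed
    haveI : CompactSpace ↥RM := isCompact_iff_compactSpace.mp hRMcl.isCompact
    set δ0 := (QuotientGroup.mk' (M.map R.subtype)).subgroupMap R with hδ0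
    have hδ0c : Continuous δ0 := continuous_subgroupMap _ QuotientGroup.continuous_mk R
    have hδ0ker : ∀ r : ↥R, δ0 r = 1 ↔ r ∈ M := by
      intro r
      constructor
      · intro h1
        have h2 : (QuotientGroup.mk' (M.map R.subtype)) (r : G) = 1 := congrArg Subtype.val h1
        obtain ⟨m, hm, hmr⟩ := (QuotientGroup.eq_one_iff _).mp h2
        have hm' : m = r := Subtype.ext hmr
        rwa [← hm']
      · intro hr
        apply Subtype.ext
        exact (QuotientGroup.eq_one_iff _).mpr ⟨r, hr, rfl⟩
    set δ := QuotientGroup.lift M δ0 (fun r hr => (hδ0ker r).mpr hr) with hδ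
    have hδmk : ∀ r : ↥R, δ (QuotientGroup.mk r) = δ0 r := fun r => rfl
    have hδs : Function.Surjective δ := by
      intro y
      obtain ⟨r, rfl⟩ := (QuotientGroup.mk' (M.map R.subtype)).subgroupMap_surjective R y
      exact ⟨QuotientGroup.mk r, hδmk r⟩
    have hδi : Function.Injective δ := by
      rw [injective_iff_map_eq_one]
      intro a
      refine QuotientGroup.induction_on a ?_
      intro r hr
      rw [hδmk] at hr
      rw [QuotientGroup.eq_one_iff]
      exact (hδ0ker r).mp hr
    have hδc : Continuous δ := by
      rw [(QuotientGroup.isQuotientMap_mk M).continuous_iff]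
      have he : (δ ∘ (QuotientGroup.mk : ↥R → ↥R ⧸ M)) = δ0 := funext hδmk
      rw [he]
      exact hδ0c
    set e := MulEquiv.ofBijective δ ⟨hδi, hδs⟩ with he
    have hec : Continuous e.toEquiv := hδc
    set homeo := Continuous.homeoOfEquivCompactToT2 (f := e.toEquiv) hec with hhomeo
    have hθc : Continuous (e.symm.toMonoidHom) := homeo.symm.continuous
    have fdRMgrp : FittingDegenerate ↥RM := by
      apply fd_of_fsub
      intro H' hH'
      have h1 := fsub_le_ker e.symm.toMonoidHom hθc e.symm.surjective fdRM hH'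
      rw [eq_bot_iff]
      intro y hy
      have h2 : e.symm.toMonoidHom y = 1 := MonoidHom.mem_ker.mp (h1 hy)
      rw [Subgroup.mem_bot]
      exact e.symm.injective (a₁ := y) (a₂ := 1) (by rw [show e.symm y = e.symm.toMonoidHom y from rfl, h2, map_one])
    have hHRM : H ≤ RM := hker ▸ hHR
    have hbot := fsub_eq_bot_of_fd fdRMgrp (fsub_subgroupOf hHRM hH)
    rw [eq_bot_iff]
    intro x hx
    have h3 : (⟨x, hHRM hx⟩ : ↥RM) ∈ H.subgroupOf RM := Subgroup.mem_subgroupOf.mpr hx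
    rw [hbot, Subgroup.mem_bot] at h3
    rw [Subgroup.mem_bot]
    exact congrArg Subtype.val h3
  -- Conclusion
  have hMS : M.map R.subtype ∈ S := ⟨hMtnorm, hMtcl, fdG⟩
  have hRle : R ≤ M.map R.subtype := by
    conv_lhs => rw [hR]
    exact sInf_le hMS
  apply hNtop
  rw [eq_top_iff]
  intro r _
  obtain ⟨m, hm, hmr⟩ := hRle r.2
  have hm' : m = r := Subtype.ext hmr
  rw [← hm']
  exact hMN hm
end
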